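/- arXiv:1211.1533 — 7 statements merged into one kernel-verified Lean document; each statement's English description precedes it below -/
import Mathlib

section
/- Let k → D be a homomorphism of commutative rings making D a flat k-module, and let I ⊆ D be a locally invertible ideal, i.e. for every prime ideal 𝔭 of D the localized ideal I·D_𝔭 is generated by a single element which is a non-zero-divisor of D_𝔭. Then for every n > 0, the map H_n(β̄^k(I²)) → H_n(β̄^k(I)) on homology induced by the inclusion I² ⊆ I is the zero map. -/
set_option synthInstance.maxHeartbeats 1000000
set_option maxHeartbeats 1000000

noncomputable section

open scoped TensorProduct

universe u

variable (k : Type u) [CommRing k] (D : Type u) [CommRing D] [Algebra k D]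

/-- The degree-`n` term of the reduced bar complex `β̄^k(J)` of an ideal `J ⊆ D`:
it is `k` in degree `0` and the `n`-fold tensor power `J ⊗_k ⋯ ⊗_k J` in degree `n`
(realised here as the iterated binary tensor product `J ⊗ (J ⊗ ⋯ (J ⊗ k))`). -/
def BarObj (J : Ideal D) : ℕ → ModuleCat k
  | 0 => ModuleCat.of k k
  | (n + 1) => ModuleCat.of k (J ⊗[k] (BarObj J n))

/-- Multiplication of an ideal `J ⊆ D`, as a `k`-bilinear map. -/
def idealMul (J : Ideal D) : J →ₗ[k] J →ₗ[k] J :=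
  LinearMap.mk₂ k (fun a b => ⟨(a : D) * (b : D), J.mul_mem_left _ b.2⟩)
    (fun a a' b => Subtype.ext (add_mul (a : D) (a' : D) (b : D)))
    (fun c a b => Subtype.ext (smul_mul_assoc c (a : D) (b : D)))
    (fun a b b' => Subtype.ext (mul_add (a : D) (b : D) (b' : D)))
    (fun c a b => Subtype.ext (mul_smul_comm c (a : D) (b : D)))

/-- The differential of the reduced bar complex, from degree `n+1` to degree `n`.
It is zero from degree `1` to degree `0`, and in higher degrees it is the alternating
sum of the maps merging two adjacent tensor factors by multiplication, i.e.
`a₁ ⊗ ⋯ ⊗ aₘ ↦ Σ_{i=1}^{m-1} (-1)^{i-1} a₁ ⊗ ⋯ ⊗ (aᵢaᵢ₊₁) ⊗ ⋯ ⊗ aₘ`,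
presented via the recursion `d(a ⊗ ω) = (merge first two factors of a ⊗ ω) - a ⊗ d(ω)`. -/
def barD (J : Ideal D) : (n : ℕ) → (BarObj k D J (n + 1) →ₗ[k] BarObj k D J n)
  | 0 => 0
  | (n + 1) =>
      show (↥J ⊗[k] (↥J ⊗[k] (BarObj k D J n))) →ₗ[k] (↥J ⊗[k] (BarObj k D J n)) from
      ((TensorProduct.map (TensorProduct.lift (idealMul k D J)) LinearMap.id).comp
        ((TensorProduct.assoc k J J (BarObj k D J n)).symm.toLinearMap))
      - TensorProduct.map (LinearMap.id : J →ₗ[k] J)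
          (show (↥J ⊗[k] (BarObj k D J n)) →ₗ[k] (BarObj k D J n) from barD J n)

/-- The inclusion of ideals `J ≤ J'`, as a `k`-linear map. -/
def idealIncl {J J' : Ideal D} (h : J ≤ J') : J →ₗ[k] J' where
  toFun x := ⟨x.1, h x.2⟩
  map_add' _ _ := rfl
  map_smul' _ _ := rfl

/-- The chain map `β̄^k(J) → β̄^k(J')` induced by an inclusion of ideals `J ≤ J'`. -/
def barIncl (J J' : Ideal D) (h : J ≤ J') :
    (n : ℕ) → (BarObj k D J n →ₗ[k] BarObj k D J' n)
  | 0 => LinearMap.id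
  | (n + 1) =>
      show (↥J ⊗[k] (BarObj k D J n)) →ₗ[k] (↥J' ⊗[k] (BarObj k D J' n)) from
      TensorProduct.map (idealIncl k D h) (barIncl J J' h n)

namespace BarAux

variable {k D}

/-- Scaling of (the subtype of) an ideal by a ring element, as a `k`-linear map. -/
def scale (J : Ideal D) (δ : D) : J →ₗ[k] J where
  toFun a := δ • a
  map_add' a b := smul_add δ a b
  map_smul' c a := by
    apply Subtype.ext
    simp only [SetLike.val_smul, RingHom.id_apply]
    exact smul_comm δ c (a : D)

/-- first-slot scaling on `J ⊗ W`. -/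
def smulT (J : Ideal D) (δ : D) (W : Type u) [AddCommGroup W] [Module k W] :
    (↥J ⊗[k] W) →ₗ[k] (↥J ⊗[k] W) :=
  LinearMap.rTensor W (scale J δ)

@[simp] lemma smulT_tmul (J : Ideal D) (δ : D) (W : Type u) [AddCommGroup W] [Module k W]
    (a : J) (w : W) : smulT J δ W (a ⊗ₜ[k] w) = (δ • a) ⊗ₜ[k] w := rfl

lemma scale_scale (J : Ideal D) (δ δ' : D) :
    (scale (k:=k) J δ).comp (scale J δ') = scale J (δ * δ') := by
  refine LinearMap.ext fun a => Subtype.ext ?_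
  exact (mul_smul δ δ' (a : D)).symm

lemma smulT_smulT (J : Ideal D) (δ δ' : D) (W : Type u) [AddCommGroup W] [Module k W]
    (u : ↥J ⊗[k] W) : smulT J δ W (smulT J δ' W u) = smulT J (δ * δ') W u := by
  rw [smulT, smulT, smulT, ← LinearMap.rTensor_comp_apply, scale_scale]

-- test defeq: apply smulT to a Bar element
example (J : Ideal D) (δ : D) (m : ℕ) (v : BarObj k D J (m+1)) :
    ↥J ⊗[k] (BarObj k D J m : Type u) := smulT J δ (BarObj k D J m) v

example (J : Ideal D) (δ : D) (m : ℕ) (v : BarObj k D J (m+2)) :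
    BarObj k D J (m+1) := barD k D J (m+1) (smulT J δ (↥J ⊗[k] (BarObj k D J m : Type u)) v)

lemma barD_zero (J : Ideal D) : barD k D J 0 = 0 := rfl

lemma merge_aux (J : Ideal D) (m : ℕ) (a : J) (τ : ↥J ⊗[k] (BarObj k D J m : Type u)) :
    (TensorProduct.map (TensorProduct.lift (idealMul k D J))
        (LinearMap.id : BarObj k D J m →ₗ[k] BarObj k D J m))
      ((TensorProduct.assoc k ↥J ↥J (BarObj k D J m)).symm (a ⊗ₜ[k] τ))
    = smulT J (a : D) (BarObj k D J m) τ := by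
  induction τ using TensorProduct.induction_on with
  | zero => simp
  | tmul b ρ =>
      simp only [TensorProduct.assoc_symm_tmul, TensorProduct.map_tmul, TensorProduct.lift.tmul,
        LinearMap.id_apply, smulT_tmul]
      rfl
  | add u v hu hv =>
      simp only [TensorProduct.tmul_add, map_add, hu, hv]

lemma barD_succ_tmul (J : Ideal D) (m : ℕ) (a : J) (τ : ↥J ⊗[k] (BarObj k D J m : Type u)) :
    barD k D J (m+1) (a ⊗ₜ[k] τ)
      = smulT J (a : D) (BarObj k D J m) τ - a ⊗ₜ[k] (barD k D J m τ) := by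
  show ((TensorProduct.map (TensorProduct.lift (idealMul k D J)) LinearMap.id).comp
        ((TensorProduct.assoc k J J (BarObj k D J m)).symm.toLinearMap)
      - TensorProduct.map (LinearMap.id : J →ₗ[k] J)
          (show (↥J ⊗[k] (BarObj k D J m)) →ₗ[k] (BarObj k D J m) from barD k D J m))
      (a ⊗ₜ[k] τ) = _
  rw [LinearMap.sub_apply, LinearMap.comp_apply]
  rw [LinearEquiv.coe_toLinearMap]
  rw [merge_aux, TensorProduct.map_tmul, LinearMap.id_apply]
  rfl


lemma smulT_one (J : Ideal D) (W : Type u) [AddCommGroup W] [Module k W] (u : ↥J ⊗[k] W) :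
    smulT J 1 W u = u := by
  have h : scale (k:=k) J 1 = LinearMap.id := LinearMap.ext fun a => one_smul D a
  rw [smulT, h, LinearMap.rTensor_id, LinearMap.id_apply]

lemma smulT_zero (J : Ideal D) (W : Type u) [AddCommGroup W] [Module k W] (u : ↥J ⊗[k] W) :
    smulT J 0 W u = 0 := by
  have h : scale (k:=k) J 0 = 0 := LinearMap.ext fun a => zero_smul D a
  rw [smulT, h, LinearMap.rTensor_zero, LinearMap.zero_apply]

lemma smulT_add (J : Ideal D) (δ δ' : D) (W : Type u) [AddCommGroup W] [Module k W]
    (u : ↥J ⊗[k] W) : smulT J (δ + δ') W u = smulT J δ W u + smulT J δ' W u := by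
  have h : scale (k:=k) J (δ + δ') = scale J δ + scale J δ' :=
    LinearMap.ext fun a => add_smul δ δ' a
  rw [smulT, h, LinearMap.rTensor_add, LinearMap.add_apply]; rfl

/-- equivariance of the bar differential for the first-slot scaling -/
lemma barD_smulT (J : Ideal D) (δ : D) (m : ℕ) (v : ↥J ⊗[k] (BarObj k D J (m+1) : Type u)) :
    barD k D J (m+1) (smulT J δ (BarObj k D J (m+1)) v)
      = smulT J δ (BarObj k D J m) (barD k D J (m+1) v) := by
  induction v using TensorProduct.induction_on with
  | zero => erw [map_zero]
  | tmul a τ =>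
      erw [smulT_tmul, barD_succ_tmul, barD_succ_tmul, map_sub, smulT_smulT, smulT_tmul]
      rfl
  | add u v hu hv =>
      have e : ∀ x y : ↥J ⊗[k] (BarObj k D J (m+1) : Type u),
          barD k D J (m+1) (x + y) = barD k D J (m+1) x + barD k D J (m+1) y :=
        fun x y => map_add (barD k D J (m+1)) x y
      rw [map_add, e, e, hu, hv]
      exact (map_add _ _ _).symm

section Incl

variable {J J' : Ideal D} (hJJ : J ≤ J')

@[simp] lemma idealIncl_coe (a : J) : ((idealIncl k D hJJ a : ↥J') : D) = (a : D) := rfl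

lemma barIncl_tmul (m : ℕ) (a : J) (τ : BarObj k D J m) :
    barIncl k D J J' hJJ (m+1) (a ⊗ₜ[k] τ)
      = (idealIncl k D hJJ a) ⊗ₜ[k] (barIncl k D J J' hJJ m τ) := rfl

lemma barIncl_smulT (m : ℕ) (δ : D) (v : ↥J ⊗[k] (BarObj k D J m : Type u)) :
    barIncl k D J J' hJJ (m+1) (smulT J δ (BarObj k D J m) v)
      = smulT J' δ (BarObj k D J' m) (barIncl k D J J' hJJ (m+1) v) := by
  induction v using TensorProduct.induction_on with
  | zero => erw [map_zero]
  | tmul a τ =>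
      rw [smulT_tmul, barIncl_tmul, barIncl_tmul, smulT_tmul]
      congr 1
  | add u v hu hv =>
      have e : ∀ x y : ↥J ⊗[k] (BarObj k D J m : Type u),
          barIncl k D J J' hJJ (m+1) (x + y) = barIncl k D J J' hJJ (m+1) x + barIncl k D J J' hJJ (m+1) y :=
        fun x y => map_add (barIncl k D J J' hJJ (m+1)) x y
      rw [map_add, e, e, hu, hv]
      exact (map_add _ _ _).symm

lemma barIncl_chain : ∀ (m : ℕ) (v : ↥J ⊗[k] (BarObj k D J m : Type u)),
    barD k D J' m (barIncl k D J J' hJJ (m+1) v)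
      = barIncl k D J J' hJJ m (barD k D J m v)
  | 0, v => by
      show (0 : _ →ₗ[k] _) _ = barIncl k D J J' hJJ 0 ((0 : _ →ₗ[k] _) v)
      rw [LinearMap.zero_apply, LinearMap.zero_apply, map_zero]
  | (m+1), v => by
      induction v using TensorProduct.induction_on with
      | zero => erw [map_zero]
      | tmul a τ =>
          rw [barIncl_tmul]
          erw [barD_succ_tmul, barD_succ_tmul]
          have es : ∀ x y : ↥J ⊗[k] (BarObj k D J m : Type u),
              barIncl k D J J' hJJ (m+1) (x - y)
                = barIncl k D J J' hJJ (m+1) x - barIncl k D J J' hJJ (m+1) y :=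
            fun x y => map_sub _ x y
          rw [es]
          rw [barIncl_smulT hJJ m (a : D) τ, barIncl_tmul hJJ m a (barD k D J m τ), barIncl_chain m τ]
          congr 1
      | add u v hu hv =>
          have e1 : ∀ x y : ↥J ⊗[k] (BarObj k D J (m+1) : Type u),
              barIncl k D J J' hJJ (m + 1 + 1) (x + y)
                = barIncl k D J J' hJJ (m + 1 + 1) x + barIncl k D J J' hJJ (m + 1 + 1) y :=
            fun x y => map_add _ x y
          have e2 : ∀ x y : ↥J ⊗[k] (BarObj k D J (m+1) : Type u),
              barD k D J (m+1) (x + y) = barD k D J (m+1) x + barD k D J (m+1) y :=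
            fun x y => map_add _ x y
          rw [e1, map_add, hu, hv, e2, map_add]

end Incl

section CommAlg

variable (I : Ideal D) (P : Ideal D) [P.IsPrime]

lemma exists_good_gen
    (h : ∃ g : Localization.AtPrime P,
        I.map (algebraMap D (Localization.AtPrime P)) = Ideal.span {g} ∧
        g ∈ nonZeroDivisors (Localization.AtPrime P)) :
    ∃ i : D, i ∈ I ∧
      (algebraMap D (Localization.AtPrime P)) i ∈ nonZeroDivisors (Localization.AtPrime P) ∧
      I.map (algebraMap D (Localization.AtPrime P))
        = Ideal.span {(algebraMap D (Localization.AtPrime P)) i} := by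
  obtain ⟨g, hspan, hnzd⟩ := h
  have hg : g ∈ I.map (algebraMap D (Localization.AtPrime P)) :=
    hspan ▸ Ideal.mem_span_singleton_self g
  rw [IsLocalization.mem_map_algebraMap_iff P.primeCompl] at hg
  obtain ⟨⟨i0, u⟩, hiu⟩ := hg
  have hunit : IsUnit ((algebraMap D (Localization.AtPrime P)) (u : D)) :=
    IsLocalization.map_units _ u
  refine ⟨(i0 : D), i0.2, ?_, ?_⟩
  · rw [← hiu]; exact mul_mem hnzd hunit.mem_nonZeroDivisors
  · apply le_antisymm
    · rw [hspan, Ideal.span_le, Set.singleton_subset_iff]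
      obtain ⟨v, hv⟩ := hunit.exists_right_inv
      refine Ideal.mem_span_singleton'.mpr ⟨v, ?_⟩
      rw [← hiu]
      calc v * (g * (algebraMap D (Localization.AtPrime P)) (u:D))
          = g * ((algebraMap D (Localization.AtPrime P)) (u:D) * v) := by ring
        _ = g := by rw [hv, mul_one]
    · rw [Ideal.span_le, Set.singleton_subset_iff]
      exact Ideal.mem_map_of_mem _ i0.2

variable {I P}

lemma exists_div_elem {i : D}
    (hspan : I.map (algebraMap D (Localization.AtPrime P))
        = Ideal.span {(algebraMap D (Localization.AtPrime P)) i})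
    {c : D} (hc : c ∈ I) :
    ∃ s ∈ P.primeCompl, ∃ e : D, s * c = i * e := by
  have h1 : (algebraMap D (Localization.AtPrime P)) c
      ∈ Ideal.span {(algebraMap D (Localization.AtPrime P)) i} :=
    hspan ▸ Ideal.mem_map_of_mem _ hc
  obtain ⟨α, hα⟩ := Ideal.mem_span_singleton'.mp h1
  obtain ⟨⟨e1, v⟩, hev⟩ := IsLocalization.surj P.primeCompl α
  have h3 : (algebraMap D (Localization.AtPrime P)) ((v : D) * c)
      = (algebraMap D (Localization.AtPrime P)) (i * e1) := by
    rw [map_mul, map_mul, ← hα]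
    linear_combination ((algebraMap D (Localization.AtPrime P)) i) * hev
  obtain ⟨m, hm⟩ := (IsLocalization.eq_iff_exists P.primeCompl _).mp h3
  exact ⟨(m : D) * (v : D), Submonoid.mul_mem _ m.2 v.2, (m : D) * e1,
    by linear_combination hm⟩

lemma exists_div_sq {i : D}
    (hspan : I.map (algebraMap D (Localization.AtPrime P))
        = Ideal.span {(algebraMap D (Localization.AtPrime P)) i})
    {a : D} (ha : a ∈ I ^ 2) :
    ∃ s ∈ P.primeCompl, ∃ b ∈ I, s * a = i * b := by
  have h1 : (algebraMap D (Localization.AtPrime P)) a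
      ∈ Ideal.span {(algebraMap D (Localization.AtPrime P)) i ^ 2} := by
    have : (algebraMap D (Localization.AtPrime P)) a ∈ (I ^ 2).map (algebraMap D _) :=
      Ideal.mem_map_of_mem _ ha
    rwa [Ideal.map_pow, hspan, Ideal.span_singleton_pow] at this
  obtain ⟨α, hα⟩ := Ideal.mem_span_singleton'.mp h1
  have h2 : α * (algebraMap D (Localization.AtPrime P)) i
      ∈ I.map (algebraMap D (Localization.AtPrime P)) := by
    rw [hspan]; exact Ideal.mem_span_singleton'.mpr ⟨α, rfl⟩
  rw [IsLocalization.mem_map_algebraMap_iff P.primeCompl] at h2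
  obtain ⟨⟨b1, v⟩, hbv⟩ := h2
  have h3 : (algebraMap D (Localization.AtPrime P)) ((v : D) * a)
      = (algebraMap D (Localization.AtPrime P)) (i * (b1 : D)) := by
    rw [map_mul, map_mul, ← hα, ← hbv]; ring
  obtain ⟨m, hm⟩ := (IsLocalization.eq_iff_exists P.primeCompl _).mp h3
  exact ⟨(m : D) * (v : D), Submonoid.mul_mem _ m.2 v.2, (m : D) * (b1 : D),
    I.mul_mem_left _ b1.2, by linear_combination hm⟩

lemma exists_div_t {i : D} (hi : i ∈ I)
    (hspan : I.map (algebraMap D (Localization.AtPrime P))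
        = Ideal.span {(algebraMap D (Localization.AtPrime P)) i})
    {t : D} (ht : t ∈ P.primeCompl) :
    ∃ r ∈ P.primeCompl, ∃ q ∈ I, r * i = t * q := by
  have hunit : IsUnit ((algebraMap D (Localization.AtPrime P)) t) :=
    IsLocalization.map_units _ ⟨t, ht⟩
  obtain ⟨w, hw⟩ := hunit.exists_right_inv
  have h2 : w * (algebraMap D (Localization.AtPrime P)) i
      ∈ I.map (algebraMap D (Localization.AtPrime P)) :=
    Ideal.mul_mem_left _ w (Ideal.mem_map_of_mem _ hi)
  rw [IsLocalization.mem_map_algebraMap_iff P.primeCompl] at h2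
  obtain ⟨⟨q1, v⟩, hqv⟩ := h2
  have h3 : (algebraMap D (Localization.AtPrime P)) ((v : D) * i)
      = (algebraMap D (Localization.AtPrime P)) (t * (q1 : D)) := by
    rw [map_mul, map_mul]
    linear_combination ((algebraMap D (Localization.AtPrime P)) t) * hqv -
      ((algebraMap D (Localization.AtPrime P)) i *
        (algebraMap D (Localization.AtPrime P)) (v : D)) * hw
  obtain ⟨m, hm⟩ := (IsLocalization.eq_iff_exists P.primeCompl _).mp h3
  exact ⟨(m : D) * (v : D), Submonoid.mul_mem _ m.2 v.2, (m : D) * (q1 : D),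
    I.mul_mem_left _ q1.2, by linear_combination hm⟩

lemma map_zero_torsion {c : D}
    (h : (algebraMap D (Localization.AtPrime P)) c = 0) :
    ∃ t ∈ P.primeCompl, t * c = 0 := by
  obtain ⟨m, hm⟩ := (IsLocalization.map_eq_zero_iff P.primeCompl _ c).mp h
  exact ⟨(m : D), m.2, hm⟩

end CommAlg

section Flatness

/-- A locally invertible ideal is flat as a `D`-module. -/
theorem flat_of_loc_inv (I : Ideal D)
    (hloc : ∀ (𝔭 : Ideal D) (_ : 𝔭.IsPrime),
      ∃ g : Localization.AtPrime 𝔭,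
        I.map (algebraMap D (Localization.AtPrime 𝔭)) = Ideal.span {g} ∧
        g ∈ nonZeroDivisors (Localization.AtPrime 𝔭)) :
    Module.Flat D ↥I := by
  rw [Module.Flat.iff_rTensor_injective']
  intro J
  rw [injective_iff_map_eq_zero]
  intro u hu
  let A : Ideal D :=
    { carrier := {θ : D | θ • u = 0}
      add_mem' := fun {θ₁ θ₂} h1 h2 => by
        simp only [Set.mem_setOf_eq] at h1 h2 ⊢
        rw [add_smul, h1, h2, add_zero]
      zero_mem' := by simp only [Set.mem_setOf_eq, zero_smul]
      smul_mem' := fun d θ h => by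
        simp only [Set.mem_setOf_eq, smul_eq_mul] at h ⊢
        rw [mul_smul, h, smul_zero] }
  have hAmem : ∀ θ : D, θ ∈ A ↔ θ • u = 0 := fun θ => Iff.rfl
  suffices hA : A = ⊤ by
    have h1 : (1 : D) ∈ A := by rw [hA]; trivial
    rw [hAmem, one_smul] at h1
    exact h1
  by_contra hA
  obtain ⟨P, hPmax, hAP⟩ := Ideal.exists_le_maximal A hA
  haveI := hPmax.isPrime
  obtain ⟨i, hiI, hnzd, hspan⟩ := exists_good_gen I P (hloc P hPmax.isPrime)
  have hdiv : ∀ v : ↥J ⊗[D] ↥I, ∃ s ∈ P.primeCompl, ∃ w : ↥J,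
      s • v = w ⊗ₜ[D] (⟨i, hiI⟩ : ↥I) := by
    intro v
    induction v using TensorProduct.induction_on with
    | zero =>
        exact ⟨1, Submonoid.one_mem _, 0, by rw [smul_zero, TensorProduct.zero_tmul]⟩
    | tmul a c =>
        obtain ⟨s, hs, e, he⟩ := exists_div_elem hspan c.2
        refine ⟨s, hs, e • a, ?_⟩
        have h1 : s • c = e • (⟨i, hiI⟩ : ↥I) := by
          apply Subtype.ext
          simp only [SetLike.val_smul, smul_eq_mul]
          linear_combination he
        rw [← TensorProduct.tmul_smul, h1, ← TensorProduct.smul_tmul]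
    | add v₁ v₂ h1 h2 =>
        obtain ⟨s1, hs1, w1, hw1⟩ := h1
        obtain ⟨s2, hs2, w2, hw2⟩ := h2
        refine ⟨s1 * s2, Submonoid.mul_mem _ hs1 hs2, s2 • w1 + s1 • w2, ?_⟩
        rw [TensorProduct.add_tmul, smul_add,
          show (s1 * s2) • v₁ = s2 • (s1 • v₁) by rw [← mul_smul, mul_comm],
          show (s1 * s2) • v₂ = s1 • (s2 • v₂) by rw [← mul_smul], hw1, hw2,
          TensorProduct.smul_tmul', TensorProduct.smul_tmul']
  obtain ⟨s, hs, w, hw⟩ := hdiv u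
  have h1 : (J.subtype w) ⊗ₜ[D] (⟨i, hiI⟩ : ↥I) = 0 := by
    have h0 : LinearMap.rTensor ↥I J.subtype (s • u) = 0 := by
      rw [map_smul, hu, smul_zero]
    rw [hw] at h0
    exact h0
  have h3 : (w : D) • (⟨i, hiI⟩ : ↥I) = 0 := by
    have := congrArg (TensorProduct.lid D ↥I) h1
    simpa using this
  have h2 : (w : D) * i = 0 := Subtype.ext_iff.mp h3
  have h4 : (algebraMap D (Localization.AtPrime P)) (w : D) = 0 :=
    (mem_nonZeroDivisors_iff_right.mp hnzd) _ (by rw [← map_mul, h2, map_zero])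
  obtain ⟨t, ht, htw⟩ := map_zero_torsion h4
  have hmem : t * s ∈ A := by
    rw [hAmem, mul_smul, hw, TensorProduct.smul_tmul']
    have : t • w = 0 := Subtype.ext (by simpa using htw)
    rw [this, TensorProduct.zero_tmul]
  exact Submonoid.mul_mem _ ht hs (hAP hmem)

end Flatness


section Torsion

variable (I : Ideal D) (P : Ideal D) [P.IsPrime]

lemma smulT_torsion {i : D}
    (hnzd : algebraMap D (Localization.AtPrime P) i ∈ nonZeroDivisors (Localization.AtPrime P))
    (W : Type u) [AddCommGroup W] [Module k W] [Module.Flat k W]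
    (ζ : ↥I ⊗[k] W) (h : smulT I i W ζ = 0) :
    ∃ t ∈ P.primeCompl, smulT I t W ζ = 0 := by
  set L := Localization.AtPrime P with hLdef
  let ψ : ↥I →ₗ[k] L :=
    ((Algebra.linearMap D L).restrictScalars k).comp ((Submodule.subtype I).restrictScalars k)
  let T : Submodule k ↥I :=
    { carrier := {c : ↥I | ∃ t ∈ P.primeCompl, t • c = 0}
      add_mem' := fun {c₁ c₂} h1 h2 => by
        obtain ⟨t1, ht1, e1⟩ := h1
        obtain ⟨t2, ht2, e2⟩ := h2
        refine ⟨t1 * t2, Submonoid.mul_mem _ ht1 ht2, ?_⟩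
        have a1 : (t1 * t2) • c₁ = 0 := by rw [mul_comm, mul_smul, e1, smul_zero]
        have a2 : (t1 * t2) • c₂ = 0 := by rw [mul_smul, e2, smul_zero]
        rw [smul_add, a1, a2, add_zero]
      zero_mem' := ⟨1, Submonoid.one_mem _, smul_zero 1⟩
      smul_mem' := fun a c hc => by
        obtain ⟨t, ht, e⟩ := hc
        exact ⟨t, ht, by rw [smul_comm, e, smul_zero]⟩ }
  have hker : LinearMap.ker ψ = T := by
    ext c
    simp only [LinearMap.mem_ker]
    constructor
    · intro hc
      obtain ⟨t, ht, e⟩ := map_zero_torsion (P := P) (c := (c : D)) hc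
      exact ⟨t, ht, Subtype.ext (by simpa using e)⟩
    · rintro ⟨t, ht, e⟩
      have hval : t * (c : D) = 0 := by
        have := congrArg (fun z : ↥I => (z : D)) e
        simpa using this
      have hunit : IsUnit ((algebraMap D L) t) := IsLocalization.map_units _ ⟨t, ht⟩
      have h1 : (algebraMap D L) t * (algebraMap D L) (c : D) = 0 := by
        rw [← map_mul, hval, map_zero]
      exact (hunit.mul_right_eq_zero).mp h1
  have hcomm : (LinearMap.mulLeft k ((algebraMap D L) i)).comp ψ = ψ.comp (scale I i) := by
    ext c
    show (algebraMap D L) i * (algebraMap D L) (c : D) = (algebraMap D L) ((i • c : ↥I) : D)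
    rw [← map_mul]
    rfl
  have hmul_inj : Function.Injective (LinearMap.mulLeft k ((algebraMap D L) i)) := by
    intro a b hab
    simp only [LinearMap.mulLeft_apply] at hab
    have h0 : (a - b) * (algebraMap D L) i = 0 := by linear_combination hab
    exact sub_eq_zero.mp ((mem_nonZeroDivisors_iff_right.mp hnzd) _ h0)
  have h1 : LinearMap.rTensor W ψ ζ = 0 := by
    apply Module.Flat.rTensor_preserves_injective_linearMap (M := W) _ hmul_inj
    rw [map_zero, ← LinearMap.rTensor_comp_apply, hcomm, LinearMap.rTensor_comp_apply]
    rw [show LinearMap.rTensor W (scale (k := k) I i) ζ = smulT I i W ζ from rfl, h, map_zero]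
  have hle : T ≤ LinearMap.ker ψ := le_of_eq hker.symm
  have hjinj : Function.Injective (T.liftQ ψ hle) := by
    rw [← LinearMap.ker_eq_bot]
    exact Submodule.ker_liftQ_eq_bot _ _ _ (le_of_eq hker)
  have hexact := rTensor_exact (R := k) W (LinearMap.exact_subtype_mkQ T)
    (Submodule.mkQ_surjective T)
  have h2 : LinearMap.rTensor W T.mkQ ζ = 0 := by
    apply Module.Flat.rTensor_preserves_injective_linearMap (M := W) _ hjinj
    rw [map_zero, ← LinearMap.rTensor_comp_apply, Submodule.liftQ_mkQ, h1]
  obtain ⟨ξ, hξ⟩ := (hexact ζ).mp h2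
  suffices H : ∀ ξ : ↥T ⊗[k] W, ∃ t ∈ P.primeCompl,
      smulT I t W (LinearMap.rTensor W T.subtype ξ) = 0 by
    obtain ⟨t, ht, h5⟩ := H ξ
    exact ⟨t, ht, by rw [← hξ]; exact h5⟩
  intro ξ'
  induction ξ' using TensorProduct.induction_on with
  | zero => exact ⟨1, Submonoid.one_mem _, by rw [map_zero, map_zero]⟩
  | tmul c w =>
      obtain ⟨t, ht, e⟩ := c.2
      refine ⟨t, ht, ?_⟩
      have hc : LinearMap.rTensor W T.subtype (c ⊗ₜ[k] w) = (c : ↥I) ⊗ₜ[k] w := rfl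
      rw [hc, smulT_tmul, e, TensorProduct.zero_tmul]
  | add ξ₁ ξ₂ h1 h2 =>
      obtain ⟨t1, ht1, e1⟩ := h1
      obtain ⟨t2, ht2, e2⟩ := h2
      refine ⟨t1 * t2, Submonoid.mul_mem _ ht1 ht2, ?_⟩
      have hA : smulT I (t1 * t2) W (LinearMap.rTensor W T.subtype ξ₁) = 0 := by
        rw [mul_comm, ← smulT_smulT, e1, map_zero]
      have hB : smulT I (t1 * t2) W (LinearMap.rTensor W T.subtype ξ₂) = 0 := by
        rw [← smulT_smulT, e2, map_zero]
      rw [map_add, map_add, hA, hB, add_zero]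

end Torsion

section BarFlat

lemma flat_bar (I : Ideal D) (hfl : Module.Flat k ↥I) :
    ∀ m : ℕ, Module.Flat k (BarObj k D I m : Type u)
  | 0 => inferInstanceAs (Module.Flat k k)
  | (m + 1) => by
      haveI := flat_bar I hfl m
      haveI := hfl
      exact inferInstanceAs (Module.Flat k (↥I ⊗[k] (BarObj k D I m : Type u)))

end BarFlat

section ExistsW

lemma exists_w (I : Ideal D) (P : Ideal D) [P.IsPrime] {i : D} (hiI : i ∈ I)
    (hspan : I.map (algebraMap D (Localization.AtPrime P))
        = Ideal.span {(algebraMap D (Localization.AtPrime P)) i})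
    (hle : I ^ 2 ≤ I) (n : ℕ) :
    ∀ x : ↥(I ^ 2) ⊗[k] (BarObj k D (I ^ 2) n : Type u),
      ∃ s ∈ P.primeCompl, ∃ w : ↥I ⊗[k] (BarObj k D I n : Type u),
        smulT I i (BarObj k D I n) w
          = smulT I s (BarObj k D I n)
              (TensorProduct.map (idealIncl k D hle) (barIncl k D (I ^ 2) I hle n) x) := by
  intro x
  induction x using TensorProduct.induction_on with
  | zero => exact ⟨1, Submonoid.one_mem _, 0, by rw [map_zero, map_zero, map_zero]⟩
  | tmul a ω =>
      obtain ⟨s, hs, b, hb, hsb⟩ := exists_div_sq hspan a.2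
      refine ⟨s, hs, (⟨b, hb⟩ : ↥I) ⊗ₜ[k] (barIncl k D (I ^ 2) I hle n ω), ?_⟩
      rw [TensorProduct.map_tmul, smulT_tmul, smulT_tmul]
      congr 1
      apply Subtype.ext
      show i * b = s * (a : D)
      linear_combination -hsb
  | add x₁ x₂ h1 h2 =>
      obtain ⟨s1, hs1, w1, hw1⟩ := h1
      obtain ⟨s2, hs2, w2, hw2⟩ := h2
      refine ⟨s1 * s2, Submonoid.mul_mem _ hs1 hs2,
        smulT I s2 _ w1 + smulT I s1 _ w2, ?_⟩
      have e1 : smulT I i (BarObj k D I n) (smulT I s2 _ w1)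
          = smulT I (s1 * s2) (BarObj k D I n)
              (TensorProduct.map (idealIncl k D hle) (barIncl k D (I ^ 2) I hle n) x₁) := by
        rw [smulT_smulT, mul_comm i s2, ← smulT_smulT, hw1, smulT_smulT, mul_comm s2 s1]
      have e2 : smulT I i (BarObj k D I n) (smulT I s1 _ w2)
          = smulT I (s1 * s2) (BarObj k D I n)
              (TensorProduct.map (idealIncl k D hle) (barIncl k D (I ^ 2) I hle n) x₂) := by
        rw [smulT_smulT, mul_comm i s1, ← smulT_smulT, hw2, smulT_smulT]
      rw [map_add, e1, e2, map_add, map_add]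

end ExistsW

end BarAux

/-- Let `k → D` be a flat homomorphism of commutative rings and
`I ⊆ D` a locally invertible ideal (at every prime `𝔭` of `D`, the ideal `I·D_𝔭` is
generated by a single non-zero-divisor of `D_𝔭`).  Then for every `n > 0` the map
`H_n(β̄^k(I²)) → H_n(β̄^k(I))` induced by the inclusion `I² ⊆ I` is zero, i.e. every
degree-`(n+1)` cycle of `β̄^k(I²)` maps to a boundary of `β̄^k(I)`. -/
theorem bar_homology_map_of_sq_zero
    [Module.Flat k D] (I : Ideal D)
    (hloc : ∀ (𝔭 : Ideal D) (_ : 𝔭.IsPrime),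
      ∃ g : Localization.AtPrime 𝔭,
        I.map (algebraMap D (Localization.AtPrime 𝔭)) = Ideal.span {g} ∧
        g ∈ nonZeroDivisors (Localization.AtPrime 𝔭)) :
    ∀ (n : ℕ) (x : BarObj k D (I ^ 2) (n + 1)),
      barD k D (I ^ 2) n x = 0 →
        ∃ y : BarObj k D I (n + 2),
          barD k D I (n + 1) y =
            barIncl k D (I ^ 2) I (Ideal.pow_le_self two_ne_zero) (n + 1) x := by
  intro n x hx
  have hle : I ^ 2 ≤ I := Ideal.pow_le_self two_ne_zero
  haveI hflD : Module.Flat D ↥I := BarAux.flat_of_loc_inv I hloc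
  haveI hflk : Module.Flat k ↥I := Module.Flat.trans k D ↥I
  set ξ := barIncl k D (I ^ 2) I (Ideal.pow_le_self two_ne_zero) (n + 1) x with hξ
  let A : Ideal D :=
    { carrier := {θ : D | ∃ y : ↥I ⊗[k] (BarObj k D I (n+1) : Type u),
        barD k D I (n+1) y = BarAux.smulT I θ (BarObj k D I n) ξ}
      add_mem' := fun {θ₁ θ₂} h1 h2 => by
        obtain ⟨y1, e1⟩ := h1
        obtain ⟨y2, e2⟩ := h2
        exact ⟨y1 + y2, by
          rw [show barD k D I (n+1) (y1 + y2) = barD k D I (n+1) y1 + barD k D I (n+1) y2 from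
            map_add _ y1 y2, e1, e2]
          exact (BarAux.smulT_add I θ₁ θ₂ (BarObj k D I n) ξ).symm⟩
      zero_mem' := ⟨0,
        (map_zero (barD k D I (n+1))).trans (BarAux.smulT_zero I (BarObj k D I n) ξ).symm⟩
      smul_mem' := fun d θ h => by
        obtain ⟨y, e⟩ := h
        refine ⟨BarAux.smulT I d (BarObj k D I (n+1)) y, ?_⟩
        rw [smul_eq_mul, BarAux.barD_smulT, e, BarAux.smulT_smulT I d θ (BarObj k D I n) ξ] }
  have hAmem : ∀ θ : D, θ ∈ A ↔ ∃ y : ↥I ⊗[k] (BarObj k D I (n+1) : Type u),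
      barD k D I (n+1) y = BarAux.smulT I θ (BarObj k D I n) ξ := fun _ => Iff.rfl
  suffices hA : A = ⊤ by
    have h1 : (1:D) ∈ A := by rw [hA]; exact Submodule.mem_top
    rw [hAmem] at h1
    obtain ⟨y, e⟩ := h1
    exact ⟨y, by rw [e, BarAux.smulT_one I (BarObj k D I n) ξ]⟩
  by_contra hA
  obtain ⟨P, hPmax, hAP⟩ := Ideal.exists_le_maximal A hA
  haveI := hPmax.isPrime
  obtain ⟨i, hiI, hnzd, hspan⟩ := BarAux.exists_good_gen I P (hloc P hPmax.isPrime)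
  obtain ⟨s, hs, w, hw⟩ := BarAux.exists_w I P hiI hspan hle n x
  have hwξ : BarAux.smulT I i (BarObj k D I n) w
      = BarAux.smulT I s (BarObj k D I n) ξ := hw
  have hkill : ∃ t ∈ P.primeCompl,
      barD k D I n (BarAux.smulT I t (BarObj k D I n) w) = 0 := by
    cases n with
    | zero =>
        refine ⟨1, Submonoid.one_mem _, ?_⟩
        rw [BarAux.barD_zero]
        rfl
    | succ m =>
        have hz : barD k D I (m+1) ξ = 0 := by
          rw [hξ, BarAux.barIncl_chain hle (m+1) x, hx, map_zero]
        have hcyc : BarAux.smulT I i (BarObj k D I m) (barD k D I (m+1) w) = 0 := by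
          rw [← BarAux.barD_smulT, hwξ, BarAux.barD_smulT I s m ξ, hz]
          exact map_zero _
        haveI := BarAux.flat_bar I hflk m
        obtain ⟨t, ht, he⟩ := BarAux.smulT_torsion I P hnzd
          (BarObj k D I m : Type u) (barD k D I (m+1) w) hcyc
        exact ⟨t, ht, by rw [BarAux.barD_smulT, he]; rfl⟩
  obtain ⟨t, ht, hdw⟩ := hkill
  obtain ⟨r, hr, q, hq, hrq⟩ := BarAux.exists_div_t hiI hspan ht
  have hfinal : (r * s) ∈ A := by
    rw [hAmem]
    refine ⟨(⟨q, hq⟩ : ↥I) ⊗ₜ[k] (BarAux.smulT I t (BarObj k D I n) w), ?_⟩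
    rw [BarAux.barD_succ_tmul, hdw, TensorProduct.tmul_zero, sub_zero, BarAux.smulT_smulT]
    rw [show (((⟨q, hq⟩ : ↥I) : D) * t) = r * i from by
      have hcoe : ((⟨q, hq⟩ : ↥I) : D) = q := rfl
      rw [hcoe]; linear_combination -hrq]
    rw [← BarAux.smulT_smulT, hwξ, BarAux.smulT_smulT I r s (BarObj k D I n) ξ]
  exact Submonoid.mul_mem _ hr hs (hAP hfinal)


end
end

section
/- Let R be a commutative ℚ-algebra, J ⊆ R a nilpotent ideal, and n ≥ 1 an integer. Then the kernel of the natural map K_n^M(R) → K_n^M(R/J) is a divisible abelian group: every element of the kernel is an m-th multiple of an element of the kernel, for every integer m ≥ 1. -/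
noncomputable section

open scoped TensorProduct

/-- The `n`-fold tensor power over `ℤ` of the (additivised) unit group of `R`. -/
abbrev MilnorPre (R : Type*) [CommRing R] (n : ℕ) : Type _ :=
  PiTensorProduct ℤ fun _ : Fin n => Additive Rˣ

/-- The submodule of Steinberg relations: it is spanned by the elementary tensors
`a₁ ⊗ ⋯ ⊗ aₙ` of units such that `aᵢ + aᵢ₊₁ = 1` in `R` for some `i`. -/
def steinbergRel (R : Type*) [CommRing R] (n : ℕ) : Submodule ℤ (MilnorPre R n) :=
  Submodule.span ℤ {x | ∃ a : Fin n → Rˣ,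
    (∃ i : Fin n, ∃ h : (i : ℕ) + 1 < n, ((a i : R) + (a ⟨(i : ℕ) + 1, h⟩ : R) = 1)) ∧
    x = PiTensorProduct.tprod ℤ fun i => Additive.ofMul (a i)}

/-- The `n`-th Milnor K-group of a commutative ring `R`. -/
def MilnorK (R : Type*) [CommRing R] (n : ℕ) : Type _ :=
  MilnorPre R n ⧸ steinbergRel R n

instance (R : Type*) [CommRing R] (n : ℕ) : AddCommGroup (MilnorK R n) :=
  inferInstanceAs (AddCommGroup (MilnorPre R n ⧸ steinbergRel R n))

instance (R : Type*) [CommRing R] (n : ℕ) : Module ℤ (MilnorK R n) :=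
  inferInstanceAs (Module ℤ (MilnorPre R n ⧸ steinbergRel R n))

/-- The Steinberg symbol `{a₁, …, aₙ} ∈ K_n^M(R)`. -/
def milnorSymbol {R : Type*} [CommRing R] {n : ℕ} (a : Fin n → Rˣ) : MilnorK R n :=
  Submodule.Quotient.mk (PiTensorProduct.tprod ℤ fun i => Additive.ofMul (a i))

/-- The map on tensor powers of unit groups induced by a ring homomorphism. -/
def milnorPreMap {R S : Type*} [CommRing R] [CommRing S] (f : R →+* S) (n : ℕ) :
    MilnorPre R n →ₗ[ℤ] MilnorPre S n :=
  PiTensorProduct.map fun _ =>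
    (MonoidHom.toAdditive (Units.map (f : R →* S))).toIntLinearMap

theorem milnorPreMap_steinberg {R S : Type*} [CommRing R] [CommRing S] (f : R →+* S)
    (n : ℕ) : steinbergRel R n ≤ (steinbergRel S n).comap (milnorPreMap f n) := by
  refine Submodule.span_le.mpr ?_
  rintro x ⟨a, ⟨i, hi, hsum⟩, rfl⟩
  refine Submodule.mem_comap.mpr ?_
  rw [milnorPreMap, PiTensorProduct.map_tprod]
  refine Submodule.subset_span ⟨fun j => Units.map (f : R →* S) (a j), ⟨i, hi, ?_⟩, rfl⟩
  simp only [Units.coe_map, MonoidHom.coe_coe, ← map_add, hsum, map_one]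

/-- The map `K_n^M(R) → K_n^M(S)` induced by a ring homomorphism `f : R → S`. -/
def milnorMap {R S : Type*} [CommRing R] [CommRing S] (f : R →+* S) (n : ℕ) :
    MilnorK R n →ₗ[ℤ] MilnorK S n :=
  Submodule.mapQ (steinbergRel R n) (steinbergRel S n) (milnorPreMap f n)
    (milnorPreMap_steinberg f n)


/-- binomial helper -/
lemma binom_aux {R : Type*} [CommRing R] (m : ℕ) (a : R) :
    ∃ c : R, (1 + a) ^ m = 1 + (m : R) * a + a ^ 2 * c := by
  induction m with
  | zero => exact ⟨0, by push_cast; ring⟩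
  | succ m ih =>
    obtain ⟨c, hc⟩ := ih
    refine ⟨c + (m : R) + a * c, ?_⟩
    rw [pow_succ, hc]
    push_cast
    ring

lemma nilpotent_of_mem {R : Type*} [CommRing R] {J : Ideal R} {k : ℕ} (hk : J ^ k = ⊥)
    {x : R} (hx : x ∈ J) : IsNilpotent x := by
  refine ⟨k, ?_⟩
  have := Ideal.pow_mem_pow hx k
  rw [hk] at this
  simpa using this

/-- m-th roots of 1 + nilpotent in a ℚ-algebra. -/
lemma root_lemma {R : Type*} [CommRing R] [Algebra ℚ R] (m : ℕ) (hm : 1 ≤ m) :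
    ∀ (k : ℕ) (J : Ideal R), J ^ k = ⊥ → ∀ j ∈ J,
      ∃ v : Rˣ, (v : R) - 1 ∈ J ∧ (v : R) ^ m = 1 + j := by
  intro k
  induction k using Nat.strong_induction_on with
  | _ k ih =>
    intro J hk j hj
    match k, hk with
    | 0, hk =>
      -- J ^ 0 = ⊤ = ⊥, R is trivial
      have h1 : (1 : R) = 0 := by
        have : (1 : R) ∈ J ^ 0 := by simp
        rw [hk] at this; simpa using this
      have hsub : Subsingleton R := subsingleton_of_zero_eq_one h1.symm
      exact ⟨1, by simpa using (Subsingleton.elim _ _), Subsingleton.elim _ _⟩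
    | 1, hk =>
      rw [pow_one] at hk
      subst hk
      obtain rfl : j = 0 := by simpa using hj
      exact ⟨1, by simp, by simp⟩
    | (k+2), hk =>
      set a : R := (m : ℚ)⁻¹ • j with ha
      have haJ : a ∈ J := by
        rw [ha, Algebra.smul_def]
        exact Ideal.mul_mem_left _ _ hj
      have hma : (m : R) * a = j := by
        rw [ha, Algebra.smul_def, ← mul_assoc]
        have : (m : R) = algebraMap ℚ R (m : ℚ) := by simp
        rw [this, ← map_mul]
        rw [mul_inv_cancel₀ (by exact_mod_cast Nat.one_le_iff_ne_zero.mp hm)]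
        simp
      obtain ⟨c, hc⟩ := binom_aux m a
      have hva : IsUnit (1 + a) := IsNilpotent.isUnit_one_add (nilpotent_of_mem hk haJ)
      set v₀ : Rˣ := hva.unit with hv₀
      have hv₀val : (v₀ : R) = 1 + a := hva.unit_spec
      -- v₀^m = 1 + j + a^2*c
      have hv₀m : (v₀ : R) ^ m = 1 + j + a ^ 2 * c := by
        rw [hv₀val, hc, hma]
      -- apply IH to J^2 with exponent k+1... need (J^2)^(k'+?) 
      have hk' : (J ^ 2) ^ (k + 1) = ⊥ := by
        have h1 : J ^ (k + 2) ≤ (⊥ : Ideal R) := le_of_eq hk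
        have h2 : (J ^ 2) ^ (k + 1) = J ^ (2 * (k + 1)) := by rw [← pow_mul]
        rw [h2, eq_bot_iff]
        calc J ^ (2 * (k + 1)) ≤ J ^ (k + 2) := Ideal.pow_le_pow_right (by omega)
        _ ≤ ⊥ := h1
      -- the correction term
      set j' : R := (1 + j) * ((v₀⁻¹ : Rˣ) : R) ^ m - 1 with hj'
      have hj'mem : j' ∈ J ^ 2 := by
        have key : j' = ((v₀⁻¹ : Rˣ) : R) ^ m * (-(a ^ 2 * c)) := by
          rw [hj']
          have hvv : ((v₀⁻¹ : Rˣ) : R) * (v₀ : R) = 1 := by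
            rw [← Units.val_mul, inv_mul_cancel v₀, Units.val_one]
          have hvvm : ((v₀⁻¹ : Rˣ) : R) ^ m * ((v₀ : R)) ^ m = 1 := by
            rw [← mul_pow, hvv, one_pow]
          calc (1 + j) * ((v₀⁻¹ : Rˣ) : R) ^ m - 1
              = ((v₀⁻¹ : Rˣ) : R) ^ m * ((1 + j) - (v₀:R)^m) + (((v₀⁻¹ : Rˣ) : R) ^ m * ((v₀:R))^m - 1) := by ring
            _ = ((v₀⁻¹ : Rˣ) : R) ^ m * (-(a^2*c)) := by rw [hvvm, hv₀m]; ring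
        rw [key]
        refine Ideal.mul_mem_left _ _ ?_
        refine neg_mem ?_
        have : a ^ 2 ∈ J ^ 2 := Ideal.pow_mem_pow haJ 2
        exact Ideal.mul_mem_right _ _ this
      have hlt : k + 1 < k + 2 := by omega
      obtain ⟨z, hz1, hz2⟩ := ih (k + 1) hlt (J ^ 2) hk' j' hj'mem
      refine ⟨v₀ * z, ?_, ?_⟩
      · have hz1' : (z : R) - 1 ∈ J := (Ideal.pow_le_self (by norm_num)) hz1
        have : ((v₀ * z : Rˣ) : R) - 1 = ((v₀ : R) - 1) * (z : R) + ((z : R) - 1) := by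
          push_cast; ring
        rw [this]
        exact add_mem (Ideal.mul_mem_right _ _ (by rw [hv₀val]; simpa using haJ)) hz1'
      · have : ((v₀ * z : Rˣ) : R) ^ m = (v₀ : R) ^ m * ((z : R)) ^ m := by push_cast; ring
        rw [this, hz2, hj']
        have hvvm : ((v₀ : R)) ^ m * ((v₀⁻¹ : Rˣ) : R) ^ m = 1 := by
          rw [← mul_pow]
          have : (v₀ : R) * ((v₀⁻¹ : Rˣ) : R) = 1 := by
            rw [← Units.val_mul, mul_inv_cancel v₀, Units.val_one]
          rw [this, one_pow]
        calc (v₀ : R) ^ m * (1 + ((1 + j) * ((v₀⁻¹ : Rˣ) : R) ^ m - 1))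
            = (1 + j) * ((v₀ : R) ^ m * ((v₀⁻¹ : Rˣ) : R) ^ m) := by ring
          _ = 1 + j := by rw [hvvm, mul_one]


section UnitsLayer
variable {R : Type*} [CommRing R] [Algebra ℚ R] (J : Ideal R)

/-- The additivised unit map. -/
def phiA : Additive Rˣ →ₗ[ℤ] Additive (R ⧸ J)ˣ :=
  (MonoidHom.toAdditive (Units.map ((Ideal.Quotient.mk J : R →+* R ⧸ J) : R →* R ⧸ J))).toIntLinearMap

lemma phiA_apply (u : Rˣ) :
    phiA J (Additive.ofMul u) =
      Additive.ofMul (Units.map ((Ideal.Quotient.mk J : R →+* R ⧸ J) : R →* R ⧸ J) u) := rfl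

lemma mem_ker_phiA_iff (u : Rˣ) :
    Additive.ofMul u ∈ LinearMap.ker (phiA J) ↔ (u : R) - 1 ∈ J := by
  rw [LinearMap.mem_ker, phiA_apply]
  constructor
  · intro h
    have h1 : Units.map ((Ideal.Quotient.mk J : R →+* R ⧸ J) : R →* R ⧸ J) u = 1 := by
      have := congrArg Additive.toMul h
      simpa using this
    have h2 : Ideal.Quotient.mk J (u : R) = Ideal.Quotient.mk J 1 := by
      have := congrArg Units.val h1
      simpa using this
    exact (Ideal.Quotient.eq).mp h2
  · intro h
    have h2 : Ideal.Quotient.mk J (u : R) = Ideal.Quotient.mk J 1 := (Ideal.Quotient.eq).mpr h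
    have h1 : Units.map ((Ideal.Quotient.mk J : R →+* R ⧸ J) : R →* R ⧸ J) u = 1 := by
      ext
      simpa using h2
    rw [h1]
    rfl

lemma isUnit_lift (hJ : IsNilpotent J) (x : R)
    (hx : IsUnit (Ideal.Quotient.mk J x)) : IsUnit x := by
  obtain ⟨k, hk⟩ := hJ
  obtain ⟨s, hs⟩ := hx
  obtain ⟨b, hb⟩ := Ideal.Quotient.mk_surjective (((s⁻¹ : _ˣ) : R ⧸ J))
  have hxb : Ideal.Quotient.mk J (x * b) = Ideal.Quotient.mk J 1 := by
    rw [map_mul, hb, ← hs, map_one]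
    rw [← Units.val_mul, mul_inv_cancel s, Units.val_one]
  have hmem : x * b - 1 ∈ J := (Ideal.Quotient.eq).mp hxb
  have hunit : IsUnit (x * b) := by
    have : x * b = 1 + (x * b - 1) := by ring
    rw [this]
    exact IsNilpotent.isUnit_one_add ⟨k, by
      have := Ideal.pow_mem_pow hmem k
      rw [hk] at this
      simpa using this⟩
  exact isUnit_of_mul_isUnit_left hunit

lemma units_map_surjective (hJ : IsNilpotent J) (s : (R ⧸ J)ˣ) :
    ∃ u : Rˣ, Units.map ((Ideal.Quotient.mk J : R →+* R ⧸ J) : R →* R ⧸ J) u = s := by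
  obtain ⟨a, ha⟩ := Ideal.Quotient.mk_surjective ((s : R ⧸ J))
  have hu : IsUnit a := isUnit_lift J hJ a (by rw [ha]; exact s.isUnit)
  refine ⟨hu.unit, ?_⟩
  ext
  simpa [hu.unit_spec] using ha

lemma phiA_surjective (hJ : IsNilpotent J) : Function.Surjective (phiA J) := by
  intro y
  obtain ⟨u, hu⟩ := units_map_surjective J hJ y.toMul
  exact ⟨Additive.ofMul u, by rw [phiA_apply, hu]; rfl⟩

/-- divisibility of the kernel -/
lemma ker_phiA_div (hJ : IsNilpotent J) (m : ℕ) (hm : 1 ≤ m) (x : Additive Rˣ)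
    (hx : x ∈ LinearMap.ker (phiA J)) :
    ∃ y ∈ LinearMap.ker (phiA J), m • y = x := by
  obtain ⟨k, hk⟩ := hJ
  have hx' : (x.toMul : R) - 1 ∈ J := (mem_ker_phiA_iff J x.toMul).mp hx
  obtain ⟨v, hv1, hv2⟩ := root_lemma m hm k J hk _ hx'
  refine ⟨Additive.ofMul v, (mem_ker_phiA_iff J v).mpr hv1, ?_⟩
  rw [← ofMul_pow]
  have : v ^ m = x.toMul := by
    ext
    push_cast [hv2]
    ring
  rw [this]
  rfl

end UnitsLayer


section SplitLayer
variable {R : Type*} [CommRing R] [Algebra ℚ R] (J : Ideal R)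

lemma zsmul_surj (hJ : IsNilpotent J) (n : ℤ) (hn : n ≠ 0)
    (a : ↥(LinearMap.ker (phiA J))) : ∃ b : ↥(LinearMap.ker (phiA J)), n • b = a := by
  rcases lt_or_gt_of_ne hn with h | h
  · obtain ⟨y, hy, hmy⟩ := ker_phiA_div J hJ (-n).toNat (by omega) (a : Additive Rˣ) a.2
    refine ⟨⟨-y, neg_mem hy⟩, ?_⟩
    apply Subtype.ext
    show n • (-y) = (a : Additive Rˣ)
    have hcast : ((-n).toNat : ℤ) = -n := by omega
    rw [zsmul_neg, ← neg_zsmul, ← hcast, natCast_zsmul, hmy]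
  · obtain ⟨y, hy, hmy⟩ := ker_phiA_div J hJ n.toNat (by omega) (a : Additive Rˣ) a.2
    refine ⟨⟨y, hy⟩, ?_⟩
    apply Subtype.ext
    show n • y = (a : Additive Rˣ)
    have hcast : (n.toNat : ℤ) = n := by omega
    rw [← hcast, natCast_zsmul, hmy]

lemma exists_retraction (hJ : IsNilpotent J) :
    ∃ r : Additive Rˣ →ₗ[ℤ] ↥(LinearMap.ker (phiA J)),
      ∀ y : ↥(LinearMap.ker (phiA J)), r (y : Additive Rˣ) = y := by
  haveI : DivisibleBy ↥(LinearMap.ker (phiA J)) ℤ := {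
    div := fun a n => if h : n = 0 then 0 else (zsmul_surj J hJ n h a).choose
    div_zero := fun a => by simp
    div_cancel := fun {n} a h => by
      simpa [h] using (zsmul_surj J hJ n h a).choose_spec }
  obtain ⟨r, hr⟩ := (Module.Baer.of_divisible _).extension_property
    (LinearMap.ker (phiA J)).subtype (Submodule.injective_subtype _) LinearMap.id
  exact ⟨r, fun y => by simpa using congrFun (congrArg (fun g => g.toFun) hr) y⟩

lemma exists_psi_sigma (hJ : IsNilpotent J) :
    ∃ (ψ : Additive Rˣ →ₗ[ℤ] Additive Rˣ)
      (σ : Additive (R ⧸ J)ˣ →ₗ[ℤ] Additive Rˣ),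
      (∀ x, σ (phiA J x) = ψ x) ∧ (∀ x, x - ψ x ∈ LinearMap.ker (phiA J)) := by
  obtain ⟨r, hr⟩ := exists_retraction J hJ
  set ψ : Additive Rˣ →ₗ[ℤ] Additive Rˣ := LinearMap.id - (LinearMap.ker (phiA J)).subtype ∘ₗ r with hψ
  have hψ_apply : ∀ x, ψ x = x - (r x : Additive Rˣ) := fun x => rfl
  have hKψ : LinearMap.ker (phiA J) ≤ LinearMap.ker ψ := by
    intro x hx
    rw [LinearMap.mem_ker, hψ_apply]
    have : r x = ⟨x, hx⟩ := by simpa using hr ⟨x, hx⟩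
    rw [this]
    simp
  have hsurj := phiA_surjective J hJ
  set e := LinearMap.quotKerEquivOfSurjective (phiA J) hsurj with he
  set σ : Additive (R ⧸ J)ˣ →ₗ[ℤ] Additive Rˣ :=
    (Submodule.liftQ (LinearMap.ker (phiA J)) ψ hKψ) ∘ₗ (e.symm : _ →ₗ[ℤ] _) with hσ
  refine ⟨ψ, σ, ?_, ?_⟩
  · intro x
    have h1 : e (Submodule.Quotient.mk x) = phiA J x := by
      simp [he, LinearMap.quotKerEquivOfSurjective]
    have h2 : e.symm (phiA J x) = Submodule.Quotient.mk x := by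
      rw [← h1, LinearEquiv.symm_apply_apply]
    show (Submodule.liftQ (LinearMap.ker (phiA J)) ψ hKψ) (e.symm (phiA J x)) = ψ x
    rw [h2, Submodule.liftQ_apply]
  · intro x
    rw [hψ_apply]
    simpa using (r x).2

end SplitLayer


section TensorLayer

/-- Auxiliary: going from prefix-length `t` to `t+1` is a single update. -/
lemma if_succ_update {n : ℕ} {A : Type*} (p c : Fin n → A) (t : ℕ) (ht : t < n) :
    (fun j : Fin n => if (j : ℕ) < t + 1 then p j else c j)
      = Function.update (fun j : Fin n => if (j : ℕ) < t then p j else c j)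
          ⟨t, ht⟩ (p ⟨t, ht⟩) := by
  funext j
  rw [Function.update_apply]
  by_cases hj : j = (⟨t, ht⟩ : Fin n)
  · subst hj
    simp
  · rw [if_neg hj]
    have hjt : (j : ℕ) ≠ t := fun h => hj (Fin.ext h)
    by_cases hlt : (j : ℕ) < t
    · rw [if_pos (by omega), if_pos hlt]
    · rw [if_neg (by omega), if_neg hlt]

variable {R : Type*} [CommRing R] [Algebra ℚ R] (J : Ideal R) (n : ℕ)

/-- The submodule of tensors with at least one slot in the kernel of `phiA`. -/
def bigD : Submodule ℤ (MilnorPre R n) :=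
  Submodule.span ℤ {x | ∃ c : Fin n → Additive Rˣ,
    (∃ i : Fin n, c i ∈ LinearMap.ker (phiA J)) ∧ x = PiTensorProduct.tprod ℤ c}

lemma milnorPreMap_eq :
    milnorPreMap (Ideal.Quotient.mk J) n = PiTensorProduct.map (fun _ : Fin n => phiA J) := rfl

lemma bigD_le_ker : bigD J n ≤ LinearMap.ker (milnorPreMap (Ideal.Quotient.mk J) n) := by
  rw [bigD, Submodule.span_le]
  rintro x ⟨c, ⟨i, hi⟩, rfl⟩
  rw [SetLike.mem_coe, LinearMap.mem_ker, milnorPreMap_eq, PiTensorProduct.map_tprod]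
  exact MultilinearMap.map_coord_zero _ i (LinearMap.mem_ker.mp hi)

lemma sub_psi_mem (ψ : Additive Rˣ →ₗ[ℤ] Additive Rˣ)
    (hψK : ∀ x, x - ψ x ∈ LinearMap.ker (phiA J)) (z : MilnorPre R n) :
    z - PiTensorProduct.map (fun _ : Fin n => ψ) z ∈ bigD J n := by
  induction z using PiTensorProduct.induction_on with
  | smul_tprod r c =>
    rw [LinearMap.map_smul, PiTensorProduct.map_tprod, ← smul_sub]
    refine Submodule.smul_mem _ _ ?_
    have key : ∀ t : ℕ, t ≤ n →
        (PiTensorProduct.tprod ℤ c) -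
          PiTensorProduct.tprod ℤ (fun j : Fin n => if (j : ℕ) < t then ψ (c j) else c j)
          ∈ bigD J n := by
      intro t
      induction t with
      | zero =>
        intro _
        have h0 : (fun j : Fin n => if (j : ℕ) < 0 then ψ (c j) else c j) = c := by
          funext j; simp
        rw [h0, sub_self]
        exact zero_mem _
      | succ t iht =>
        intro ht
        have htn : t < n := by omega
        rw [if_succ_update (fun j => ψ (c j)) c t htn]
        have hgupd : (fun j : Fin n => if (j : ℕ) < t then ψ (c j) else c j)
            = Function.update (fun j : Fin n => if (j : ℕ) < t then ψ (c j) else c j)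
                ⟨t, htn⟩ (c ⟨t, htn⟩) := by
          rw [show c ⟨t, htn⟩ =
              (fun j : Fin n => if (j : ℕ) < t then ψ (c j) else c j) ⟨t, htn⟩ by simp,
            Function.update_eq_self]
        have hterm : PiTensorProduct.tprod ℤ (fun j : Fin n => if (j : ℕ) < t then ψ (c j) else c j)
            - PiTensorProduct.tprod ℤ (Function.update
                (fun j : Fin n => if (j : ℕ) < t then ψ (c j) else c j) ⟨t, htn⟩ (ψ (c ⟨t, htn⟩)))
            = PiTensorProduct.tprod ℤ (Function.update
                (fun j : Fin n => if (j : ℕ) < t then ψ (c j) else c j) ⟨t, htn⟩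
                (c ⟨t, htn⟩ - ψ (c ⟨t, htn⟩))) := by
          rw [MultilinearMap.map_update_sub]
          congr 1
          exact congrArg _ hgupd
        have hmem : PiTensorProduct.tprod ℤ (Function.update
            (fun j : Fin n => if (j : ℕ) < t then ψ (c j) else c j) ⟨t, htn⟩
            (c ⟨t, htn⟩ - ψ (c ⟨t, htn⟩))) ∈ bigD J n := by
          refine Submodule.subset_span ⟨_, ⟨⟨t, htn⟩, ?_⟩, rfl⟩
          rw [Function.update_self]
          exact hψK (c ⟨t, htn⟩)
        have hsum := add_mem (iht (by omega)) (hterm ▸ hmem)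
        rwa [sub_add_sub_cancel] at hsum
    have hfin : (fun j : Fin n => if (j : ℕ) < n then ψ (c j) else c j)
        = fun j => ψ (c j) := by
      funext j; rw [if_pos j.isLt]
    have hkey := key n le_rfl
    rwa [hfin] at hkey
  | add u v hu hv =>
    rw [map_add, add_sub_add_comm]
    exact add_mem hu hv

lemma ker_le_bigD (hJ : IsNilpotent J) :
    LinearMap.ker (milnorPreMap (Ideal.Quotient.mk J) n) ≤ bigD J n := by
  obtain ⟨ψ, σ, hσ, hψK⟩ := exists_psi_sigma J hJ
  intro x hx
  have hfun : (fun _ : Fin n => ψ) = fun _ : Fin n => σ ∘ₗ phiA J := by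
    funext i; exact (LinearMap.ext hσ).symm
  have hcomp : PiTensorProduct.map (fun _ : Fin n => ψ)
      = PiTensorProduct.map (fun _ : Fin n => σ) ∘ₗ PiTensorProduct.map (fun _ : Fin n => phiA J) := by
    rw [hfun]
    exact PiTensorProduct.map_comp (fun _ => σ) (fun _ => phiA J)
  have hzero : PiTensorProduct.map (fun _ : Fin n => ψ) x = 0 := by
    rw [hcomp, LinearMap.comp_apply, ← milnorPreMap_eq, LinearMap.mem_ker.mp hx, map_zero]
  have hmem := sub_psi_mem J n ψ hψK x
  rwa [hzero, sub_zero] at hmem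

lemma bigD_div (hJ : IsNilpotent J) (m : ℕ) (hm : 1 ≤ m) :
    ∀ x ∈ bigD J n, ∃ y ∈ bigD J n, m • y = x := by
  intro x hx
  induction hx using Submodule.span_induction with
  | mem x h =>
    obtain ⟨c, ⟨i, hi⟩, rfl⟩ := h
    obtain ⟨y₀, hy₀, hmy₀⟩ := ker_phiA_div J hJ m hm (c i) hi
    refine ⟨PiTensorProduct.tprod ℤ (Function.update c i y₀),
      Submodule.subset_span ⟨_, ⟨i, by rwa [Function.update_self]⟩, rfl⟩, ?_⟩
    rw [← Nat.cast_smul_eq_nsmul ℤ, ← MultilinearMap.map_update_smul, Nat.cast_smul_eq_nsmul ℤ,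
      hmy₀, Function.update_eq_self]
  | zero => exact ⟨0, zero_mem _, nsmul_zero _⟩
  | add u v hu hv ihu ihv =>
    obtain ⟨y₁, hy₁, h1⟩ := ihu
    obtain ⟨y₂, hy₂, h2⟩ := ihv
    refine ⟨y₁ + y₂, add_mem hy₁ hy₂, ?_⟩
    rw [← Nat.cast_smul_eq_nsmul ℤ] at h1 h2 ⊢
    rw [smul_add, h1, h2]
  | smul a u hu ihu =>
    obtain ⟨y, hy, h1⟩ := ihu
    refine ⟨a • y, Submodule.smul_mem _ _ hy, ?_⟩
    rw [← Nat.cast_smul_eq_nsmul ℤ, smul_comm, Nat.cast_smul_eq_nsmul ℤ, h1]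

lemma steinberg_lift (hJ : IsNilpotent J) :
    steinbergRel (R ⧸ J) n ≤
      Submodule.map (milnorPreMap (Ideal.Quotient.mk J) n) (steinbergRel R n) := by
  rw [steinbergRel, Submodule.span_le]
  rintro x ⟨b, ⟨i, hilt, hsum⟩, rfl⟩
  set i' : Fin n := ⟨(i : ℕ) + 1, hilt⟩ with hi'
  have hne : i ≠ i' := by
    intro h
    have h2 := congrArg Fin.val h
    simp [hi'] at h2
  have hlift : ∀ j : Fin n, ∃ u : Rˣ,
      Units.map ((Ideal.Quotient.mk J : R →+* R ⧸ J) : R →* R ⧸ J) u = b j :=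
    fun j => units_map_surjective J hJ (b j)
  choose a₀ ha₀ using hlift
  have hmk : Ideal.Quotient.mk J ((a₀ i : R)) = (b i : R ⧸ J) := by
    rw [← ha₀ i]; rfl
  have hw : IsUnit ((1 : R) - (a₀ i : R)) := by
    refine isUnit_lift J hJ _ ?_
    have hval : Ideal.Quotient.mk J ((1 : R) - (a₀ i : R)) = ((b i' : R ⧸ J)) := by
      rw [map_sub, map_one, hmk, ← hsum]; ring
    rw [hval]
    exact (b i').isUnit
  set a : Fin n → Rˣ := Function.update a₀ i' hw.unit with ha
  have haval : ∀ j : Fin n,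
      Units.map ((Ideal.Quotient.mk J : R →+* R ⧸ J) : R →* R ⧸ J) (a j) = b j := by
    intro j
    rcases eq_or_ne j i' with rfl | hne'
    · rw [ha, Function.update_self]
      ext
      show Ideal.Quotient.mk J (hw.unit : R) = (b i' : R ⧸ J)
      rw [hw.unit_spec, map_sub, map_one, hmk, ← hsum]; ring
    · rw [ha, Function.update_of_ne hne']
      exact ha₀ j
  refine ⟨PiTensorProduct.tprod ℤ (fun j => Additive.ofMul (a j)), ?_, ?_⟩
  · refine Submodule.subset_span ⟨a, ⟨i, hilt, ?_⟩, rfl⟩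
    have hai : a i = a₀ i := by rw [ha, Function.update_of_ne hne]
    have hai' : a i' = hw.unit := by rw [ha, Function.update_self]
    show ((a i : R)) + ((a ⟨(i : ℕ) + 1, hilt⟩ : R)) = 1
    rw [show (⟨(i : ℕ) + 1, hilt⟩ : Fin n) = i' from rfl, hai, hai', hw.unit_spec]
    ring
  · rw [milnorPreMap_eq, PiTensorProduct.map_tprod]
    congr 1
    funext j
    show phiA J (Additive.ofMul (a j)) = Additive.ofMul (b j)
    rw [phiA_apply, haval j]

end TensorLayer

/-- Let `R` be a commutative `ℚ`-algebra, `J ⊆ R` a nilpotent ideal,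
and `n ≥ 1`.  Then the kernel of `K_n^M(R) → K_n^M(R/J)` is a divisible abelian group:
every element of the kernel is an `m`-th multiple of an element of the kernel, for every
`m ≥ 1`. -/
theorem ker_milnorK_to_quotient_divisible
    (R : Type*) [CommRing R] [Algebra ℚ R] (J : Ideal R) (hJ : IsNilpotent J)
    (n : ℕ) (hn : 0 < n) :
    ∀ x ∈ LinearMap.ker (milnorMap (Ideal.Quotient.mk J) n),
      ∀ m : ℕ, 1 ≤ m →
        ∃ y ∈ LinearMap.ker (milnorMap (Ideal.Quotient.mk J) n), m • y = x := by
  intro x hx m hm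
  obtain ⟨x', rfl⟩ := Submodule.Quotient.mk_surjective (steinbergRel R n) x
  have hx2 : (Submodule.Quotient.mk (milnorPreMap (Ideal.Quotient.mk J) n x')
      : MilnorK (R ⧸ J) n) = 0 := hx
  rw [Submodule.Quotient.mk_eq_zero] at hx2
  obtain ⟨t, ht, hft⟩ := steinberg_lift J n hJ hx2
  have hker : x' - t ∈ LinearMap.ker (milnorPreMap (Ideal.Quotient.mk J) n) := by
    rw [LinearMap.mem_ker, map_sub, hft, sub_self]
  obtain ⟨y', hy', hmy⟩ := bigD_div J n hJ m hm _ (ker_le_bigD J n hJ hker)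
  refine ⟨Submodule.Quotient.mk y', ?_, ?_⟩
  · show (Submodule.Quotient.mk (milnorPreMap (Ideal.Quotient.mk J) n y')
      : MilnorK (R ⧸ J) n) = 0
    rw [LinearMap.mem_ker.mp (bigD_le_ker J n hy')]
    rfl
  · have hsmul : (m • (Submodule.Quotient.mk y') : MilnorK R n)
        = Submodule.Quotient.mk (m • y') := by
      exact (map_nsmul (Submodule.mkQ (steinbergRel R n)) m y').symm
    show (m • (Submodule.Quotient.mk y') : MilnorK R n) = (Submodule.Quotient.mk x' : MilnorK R n)
    rw [hsmul, hmy]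
    have : (Submodule.Quotient.mk (x' - t) : MilnorK R n)
        = Submodule.Quotient.mk x' - Submodule.Quotient.mk t := by
      exact map_sub (Submodule.mkQ (steinbergRel R n)) x' t
    rw [this, (Submodule.Quotient.mk_eq_zero _).mpr ht, sub_zero]

end
end

section
/- Let (C(r))_{r ∈ ℕ} be an inverse system of chain complexes of abelian groups indexed by the integers, with transition chain maps φ_{s,r} : C(s) → C(r) for s ≥ r. Assume: (a) in every degree d divisible by 3, all the transition maps φ_{s,r} in degree d are isomorphisms (the terms C(r)_d form a constant system); (b) in every degree d congruent to 1 modulo 3, the group C(r)_d is finite for every r; (c) for every degree d and every r ∈ ℕ there exists s ≥ r such that the induced map on homology H_d(C(s)) → H_d(C(r)) is the zero map. Then the chain complex lim_r C(r), obtained by taking inverse limits degreewise with the induced differentials, is exact, i.e. has vanishing homology in every degree. -/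
private lemma nat_dep_choice {Z : ℕ → Sort*} (P : ∀ n, Z n → Z (n+1) → Prop) (z0 : Z 0)
    (h : ∀ n (x : Z n), ∃ y, P n x y) :
    ∃ f : ∀ n, Z n, f 0 = z0 ∧ ∀ n, P n (f n) (f (n+1)) :=
  ⟨fun n => Nat.rec z0 (fun n x => (h n x).choose) n, rfl, fun n => (h n _).choose_spec⟩

private def auxT (σ : ℕ → ℕ) : ℕ → ℕ
  | 0 => σ 0 + 1
  | n+1 => max (auxT σ n) (max (σ (n+1)) (n+1)) + 1

private lemma auxT_sigma_le (σ : ℕ → ℕ) (r : ℕ) : σ r ≤ auxT σ r := by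
  cases r with
  | zero => simp [auxT]
  | succ n => simp only [auxT]; omega

private lemma auxT_self_lt (σ : ℕ → ℕ) (r : ℕ) : r < auxT σ r := by
  cases r with
  | zero => simp [auxT]
  | succ n => simp only [auxT]; omega

private lemma auxT_mono (σ : ℕ → ℕ) (r : ℕ) : auxT σ r ≤ auxT σ (r+1) := by
  simp only [auxT]; omega

/-- A Mittag-Leffler-type tower of abelian groups has vanishing `lim¹`:
every "cocycle" `z` can be trivialized. -/
private lemma tower_solve {Z : ℕ → Type*} [∀ r, AddCommGroup (Z r)]
    (ψ : ∀ s r : ℕ, r ≤ s → Z s →+ Z r)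
    (hid : ∀ r x, ψ r r le_rfl x = x)
    (hcomp : ∀ (t s r : ℕ) (hts : s ≤ t) (hsr : r ≤ s) (x : Z t),
      ψ s r hsr (ψ t s hts x) = ψ t r (hsr.trans hts) x)
    (ML : ∀ r : ℕ, ∃ s : ℕ, ∃ h : r ≤ s, ∀ (t : ℕ) (ht : s ≤ t) (x : Z s),
      ∃ u : Z t, ψ t r (h.trans ht) u = ψ s r h x)
    (z : ∀ r, Z r) :
    ∃ c : ∀ r, Z r, ∀ r, c r = z r + ψ (r+1) r (Nat.le_succ r) (c (r+1)) := by
  classical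
  choose σ hσ1 hσ2 using ML
  obtain ⟨a, ha⟩ : ∃ a : ∀ rr, Z rr, ∀ rr,
      a rr = ∑ j ∈ Finset.Ico rr (auxT σ rr), (if h : rr ≤ j then ψ j rr h (z j) else 0) :=
    ⟨_, fun _ => rfl⟩
  have hpush : ∀ (u rr : ℕ) (h : rr ≤ u) (n : ℕ),
      ψ u rr h (∑ j ∈ Finset.Ico u n, (if hj : u ≤ j then ψ j u hj (z j) else 0)) =
      ∑ j ∈ Finset.Ico u n, (if hj : rr ≤ j then ψ j rr hj (z j) else 0) := by
    intro u rr h n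
    rw [map_sum]
    refine Finset.sum_congr rfl fun j hj => ?_
    have hu : u ≤ j := (Finset.mem_Ico.mp hj).1
    rw [dif_pos hu, dif_pos (h.trans hu)]
    exact hcomp j u rr hu h (z j)
  have hkey : ∀ r, ∃ v : Z (σ r), ψ (σ r) r (hσ1 r) v
      = a r - z r - ψ (r+1) r (Nat.le_succ r) (a (r+1)) := by
    intro r
    have hrT : r < auxT σ r := auxT_self_lt σ r
    have hσT : σ r ≤ auxT σ r := auxT_sigma_le σ r
    have hTT : auxT σ r ≤ auxT σ (r+1) := auxT_mono σ r
    refine ⟨ψ (auxT σ r) (σ r) hσT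
      (- ∑ j ∈ Finset.Ico (auxT σ r) (auxT σ (r+1)),
        (if hj : auxT σ r ≤ j then ψ j (auxT σ r) hj (z j) else 0)), ?_⟩
    rw [hcomp _ _ _ hσT (hσ1 r), map_neg,
      hpush (auxT σ r) r ((hσ1 r).trans hσT) (auxT σ (r+1)),
      ha r, ha (r+1), hpush (r+1) r (Nat.le_succ r) (auxT σ (r+1)),
      ← Finset.sum_Ico_consecutive _ (show r+1 ≤ auxT σ r from hrT) hTT,
      Finset.sum_eq_sum_Ico_succ_bot hrT, dif_pos le_rfl, hid]
    abel
  have hstep : ∀ n (x : {x : Z n // ∃ u, ψ (σ n) n (hσ1 n) u = x}),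
      ∃ y : {y : Z (n+1) // ∃ u, ψ (σ (n+1)) (n+1) (hσ1 (n+1)) u = y},
        ψ (n+1) n (Nat.le_succ n) y.1
          = x.1 - (a n - z n - ψ (n+1) n (Nat.le_succ n) (a (n+1))) := by
    intro n x
    obtain ⟨u, hu⟩ := x.2
    obtain ⟨v, hv⟩ := hkey n
    have hmax1 : σ n ≤ max (σ n) (σ (n+1)) := le_max_left _ _
    have hmax2 : σ (n+1) ≤ max (σ n) (σ (n+1)) := le_max_right _ _
    obtain ⟨w, hw⟩ := hσ2 n (max (σ n) (σ (n+1))) hmax1 (u - v)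
    refine ⟨⟨ψ (max (σ n) (σ (n+1))) (n+1) ((hσ1 (n+1)).trans hmax2) w,
      ψ (max (σ n) (σ (n+1))) (σ (n+1)) hmax2 w,
      hcomp _ _ _ hmax2 (hσ1 (n+1)) w⟩, ?_⟩
    calc ψ (n+1) n (Nat.le_succ n) (ψ (max (σ n) (σ (n+1))) (n+1) ((hσ1 (n+1)).trans hmax2) w)
        = ψ (max (σ n) (σ (n+1))) n ((Nat.le_succ n).trans ((hσ1 (n+1)).trans hmax2)) w :=
          hcomp _ _ _ ((hσ1 (n+1)).trans hmax2) (Nat.le_succ n) w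
      _ = ψ (σ n) n (hσ1 n) (u - v) := hw
      _ = x.1 - (a n - z n - ψ (n+1) n (Nat.le_succ n) (a (n+1))) := by
          rw [map_sub, hu, hv]
  obtain ⟨e, -, he⟩ := nat_dep_choice
    (P := fun n (x : {x : Z n // ∃ u, ψ (σ n) n (hσ1 n) u = x})
        (y : {y : Z (n+1) // ∃ u, ψ (σ (n+1)) (n+1) (hσ1 (n+1)) u = y}) =>
      ψ (n+1) n (Nat.le_succ n) y.1
        = x.1 - (a n - z n - ψ (n+1) n (Nat.le_succ n) (a (n+1))))
    (⟨0, 0, map_zero _⟩ : {x : Z 0 // ∃ u, ψ (σ 0) 0 (hσ1 0) u = x})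
    hstep
  refine ⟨fun r => a r - (e r).1, fun r => ?_⟩
  have h1 := he r
  rw [map_sub, h1]
  abel

private lemma range_stab {Z : ℕ → Type*} [∀ r, AddCommGroup (Z r)]
    (ψ : ∀ s r : ℕ, r ≤ s → Z s →+ Z r)
    (hcomp : ∀ (t s r : ℕ) (hts : s ≤ t) (hsr : r ≤ s) (x : Z t),
      ψ s r hsr (ψ t s hts x) = ψ t r (hsr.trans hts) x)
    (r s₀ : ℕ) (h₀ : r ≤ s₀) (hfin : (Set.range (ψ s₀ r h₀)).Finite) :
    ∃ s : ℕ, ∃ h : r ≤ s, ∀ (t : ℕ) (ht : s ≤ t) (x : Z s),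
      ∃ u : Z t, ψ t r (h.trans ht) u = ψ s r h x := by
  classical
  have hanti : ∀ (t u : ℕ) (hut : u ≤ t) (hru : r ≤ u),
      Set.range (ψ t r (hru.trans hut)) ⊆ Set.range (ψ u r hru) := by
    rintro t u hut hru x ⟨v, rfl⟩
    exact ⟨ψ t u hut v, hcomp t u r hut hru v⟩
  have hne : {n | ∃ s : ℕ, ∃ hs : s₀ ≤ s,
      (Set.range (ψ s r (h₀.trans hs))).ncard = n}.Nonempty := ⟨_, s₀, le_rfl, rfl⟩
  obtain ⟨s, hs, hcard⟩ := Nat.sInf_mem hne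
  refine ⟨s, h₀.trans hs, fun t ht x => ?_⟩
  have hsubts : Set.range (ψ t r ((h₀.trans hs).trans ht)) ⊆ Set.range (ψ s r (h₀.trans hs)) :=
    hanti t s ht (h₀.trans hs)
  have hfins : (Set.range (ψ s r (h₀.trans hs))).Finite :=
    hfin.subset (hanti s s₀ hs h₀)
  have hle : (Set.range (ψ s r (h₀.trans hs))).ncard
      ≤ (Set.range (ψ t r ((h₀.trans hs).trans ht))).ncard := by
    rw [hcard]
    exact Nat.sInf_le ⟨t, hs.trans ht, rfl⟩
  have heq := Set.eq_of_subset_of_ncard_le hsubts hle hfins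
  have hmem : ψ s r (h₀.trans hs) x ∈ Set.range (ψ t r ((h₀.trans hs).trans ht)) := by
    rw [heq]
    exact Set.mem_range_self x
  obtain ⟨u, hu⟩ := hmem
  exact ⟨u, hu⟩

/-- Let `(C(r))_{r ∈ ℕ}` be an inverse system of `ℤ`-indexed chain
complexes of abelian groups (with degree-`(d+1)`-to-degree-`d` differentials `dif r d`
and transition chain maps `φ s r`).  Assume: (a) in every degree divisible by 3 the
transition maps are isomorphisms; (b) in every degree `≡ 1 (mod 3)` all the groups are
finite; (c) for every degree and every `r` there is `s ≥ r` such that the induced map on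
homology `H_d(C(s)) → H_d(C(r))` is zero (every cycle of `C(s)` maps to a boundary of
`C(r)`).  Then the degreewise inverse limit complex is exact: every compatible family of
cycles is the boundary of a compatible family. -/
theorem limit_complex_exact_of_pro_zero_homology
    (A : ℕ → ℤ → Type*) [∀ r d, AddCommGroup (A r d)]
    (dif : ∀ (r : ℕ) (d : ℤ), A r (d + 1) →+ A r d)
    (hdd : ∀ (r : ℕ) (d : ℤ), (dif r d).comp (dif r (d + 1)) = 0)
    (φ : ∀ s r : ℕ, r ≤ s → ∀ d : ℤ, A s d →+ A r d)
    (hid : ∀ (r : ℕ) (d : ℤ) (x : A r d), φ r r le_rfl d x = x)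
    (hcomp : ∀ (t s r : ℕ) (hts : s ≤ t) (hsr : r ≤ s) (d : ℤ) (x : A t d),
      φ s r hsr d (φ t s hts d x) = φ t r (hsr.trans hts) d x)
    (hchain : ∀ (s r : ℕ) (h : r ≤ s) (d : ℤ) (x : A s (d + 1)),
      φ s r h d (dif s d x) = dif r d (φ s r h (d + 1) x))
    (ha : ∀ (s r : ℕ) (h : r ≤ s) (d : ℤ), (3 : ℤ) ∣ d → Function.Bijective (φ s r h d))
    (hb : ∀ (r : ℕ) (d : ℤ), d % 3 = 1 → Finite (A r d))
    (hc : ∀ (d : ℤ) (r : ℕ), ∃ s : ℕ, ∃ h : r ≤ s,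
      ∀ x : A s (d + 1), dif s d x = 0 →
        ∃ y : A r (d + 1 + 1), dif r (d + 1) y = φ s r h (d + 1) x) :
    ∀ (d : ℤ) (f : ∀ r : ℕ, A r (d + 1)),
      (∀ (s r : ℕ) (h : r ≤ s), φ s r h (d + 1) (f s) = f r) →
      (∀ r : ℕ, dif r d (f r) = 0) →
      ∃ g : ∀ r : ℕ, A r (d + 1 + 1),
        (∀ (s r : ℕ) (h : r ≤ s), φ s r h (d + 1 + 1) (g s) = g r) ∧
        ∀ r : ℕ, dif r (d + 1) (g r) = f r := by
  intro d f hf hz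
  classical
  have hKmem : ∀ (s r : ℕ) (h : r ≤ s) (x : A s (d+1+1)), x ∈ (dif s (d+1)).ker →
      φ s r h (d+1+1) x ∈ (dif r (d+1)).ker := by
    intro s r h x hx
    rw [AddMonoidHom.mem_ker] at hx ⊢
    rw [← hchain s r h (d+1) x, hx, map_zero]
  obtain ⟨ψK, hψK⟩ : ∃ ψK : ∀ s r : ℕ, r ≤ s → (↥(dif s (d+1)).ker →+ ↥(dif r (d+1)).ker),
      ∀ (s r : ℕ) (h : r ≤ s) (x : ↥(dif s (d+1)).ker),
        ((ψK s r h x : ↥(dif r (d+1)).ker) : A r (d+1+1)) = φ s r h (d+1+1) x.1 :=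
    ⟨fun s r h => AddMonoidHom.codRestrict
        ((φ s r h (d+1+1)).comp (dif s (d+1)).ker.subtype) _
        (fun x => hKmem s r h x.1 x.2),
      fun s r h x => rfl⟩
  have hidK : ∀ (r : ℕ) (x : ↥(dif r (d+1)).ker), ψK r r le_rfl x = x := by
    intro r x
    apply Subtype.ext
    rw [hψK]
    exact hid r (d+1+1) x.1
  have hcompK : ∀ (t s r : ℕ) (hts : s ≤ t) (hsr : r ≤ s) (x : ↥(dif t (d+1)).ker),
      ψK s r hsr (ψK t s hts x) = ψK t r (hsr.trans hts) x := by
    intro t s r hts hsr x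
    apply Subtype.ext
    rw [hψK, hψK, hψK]
    exact hcomp t s r hts hsr (d+1+1) x.1
  have hML : ∀ r : ℕ, ∃ s : ℕ, ∃ h : r ≤ s, ∀ (t : ℕ) (ht : s ≤ t) (x : ↥(dif s (d+1)).ker),
      ∃ u : ↥(dif t (d+1)).ker, ψK t r (h.trans ht) u = ψK s r h x := by
    have hd3 : d % 3 = 0 ∨ d % 3 = 1 ∨ d % 3 = 2 := by omega
    rcases hd3 with h3 | h3 | h3
    · -- degree d+3 divisible by 3: constant system there, boundaries surject
      intro r
      obtain ⟨s, hrs, hs⟩ := hc (d+1) r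
      refine ⟨s, hrs, fun t ht x => ?_⟩
      obtain ⟨y, hy⟩ := hs x.1 (AddMonoidHom.mem_ker.mp x.2)
      obtain ⟨y', hy'⟩ := (ha t r (hrs.trans ht) (d+1+1+1) (by omega)).2 y
      have hcyc : dif t (d+1) (dif t (d+1+1) y') = 0 := by
        have h0 := DFunLike.congr_fun (hdd t (d+1)) y'
        simpa using h0
      refine ⟨⟨dif t (d+1+1) y', AddMonoidHom.mem_ker.mpr hcyc⟩, Subtype.ext ?_⟩
      rw [hψK, hψK]
      show φ t r (hrs.trans ht) (d+1+1) (dif t (d+1+1) y') = φ s r hrs (d+1+1) x.1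
      rw [hchain t r (hrs.trans ht) (d+1+1) y', hy', hy]
    · -- degree d+3 finite: images eventually inside finite boundary group
      intro r
      obtain ⟨s, hrs, hs⟩ := hc (d+1) r
      haveI : Finite (A r (d+1+1+1)) := hb r (d+1+1+1) (by omega)
      have hcycb : ∀ y : A r (d+1+1+1), dif r (d+1+1) y ∈ (dif r (d+1)).ker := by
        intro y
        rw [AddMonoidHom.mem_ker]
        have h0 := DFunLike.congr_fun (hdd r (d+1)) y
        simpa using h0
      have hfin : (Set.range (ψK s r hrs)).Finite := by
        have hsub : Set.range (ψK s r hrs) ⊆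
            Set.range (fun y : A r (d+1+1+1) =>
              (⟨dif r (d+1+1) y, hcycb y⟩ : ↥(dif r (d+1)).ker)) := by
          rintro _ ⟨x, rfl⟩
          obtain ⟨y, hy⟩ := hs x.1 (AddMonoidHom.mem_ker.mp x.2)
          refine ⟨y, Subtype.ext ?_⟩
          rw [hψK]
          exact hy
        exact (Set.finite_range _).subset hsub
      exact range_stab ψK hcompK r s hrs hfin
    · -- degree d+2 finite
      intro r
      haveI : Finite (A r (d+1+1)) := hb r (d+1+1) (by omega)
      haveI : Finite (↥(dif r (d+1)).ker) := Subtype.finite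
      exact range_stab ψK hcompK r r le_rfl (Set.toFinite _)
  have hy' : ∀ r : ℕ, ∃ y : A r (d+1+1), dif r (d+1) y = f r := by
    intro r
    obtain ⟨s, hrs, hs⟩ := hc d r
    obtain ⟨y, hYy⟩ := hs (f s) (hz s)
    exact ⟨y, by rw [hYy, hf s r hrs]⟩
  choose y hy using hy'
  have hzmem : ∀ r : ℕ, φ (r+1) r (Nat.le_succ r) (d+1+1) (y (r+1)) - y r ∈ (dif r (d+1)).ker := by
    intro r
    rw [AddMonoidHom.mem_ker, map_sub, hy, ← hchain (r+1) r (Nat.le_succ r) (d+1) (y (r+1)),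
      hy, hf (r+1) r (Nat.le_succ r), sub_self]
  obtain ⟨c, hcrec⟩ := tower_solve ψK hidK hcompK hML
    (fun r => ⟨φ (r+1) r (Nat.le_succ r) (d+1+1) (y (r+1)) - y r, hzmem r⟩)
  have hadj : ∀ r : ℕ, φ (r+1) r (Nat.le_succ r) (d+1+1) (y (r+1) + ((c (r+1) : ↥(dif (r+1) (d+1)).ker) : A (r+1) (d+1+1)))
      = y r + ((c r : ↥(dif r (d+1)).ker) : A r (d+1+1)) := by
    intro r
    have h1 := congrArg (fun w : ↥(dif r (d+1)).ker => (w : A r (d+1+1))) (hcrec r)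
    simp only [AddSubgroup.coe_add, hψK] at h1
    rw [map_add, h1]
    abel
  refine ⟨fun r => y r + ((c r : ↥(dif r (d+1)).ker) : A r (d+1+1)), ?_, ?_⟩
  · intro s r hrs
    induction s, hrs using Nat.le_induction with
    | base => exact hid r (d+1+1) _
    | succ s hs ih =>
        rw [← hcomp (s+1) s r (Nat.le_succ s) hs (d+1+1) _, hadj s, ih]
  · intro r
    rw [map_add, hy, AddMonoidHom.mem_ker.mp (c r).2, add_zero]
end

section
/- Let G be an abelian group whose torsion subgroup T = {g ∈ G : n·g = 0 for some integer n ≥ 1} has finite exponent, i.e. there exists an integer m ≥ 1 with m·t = 0 for all t ∈ T. Then T is a direct summand of G: there exists a subgroup H ≤ G with T ∩ H = 0 and T + H = G. -/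
/-- If there is an additive retraction of `G` onto `T`, then `T` is a direct summand. -/
lemma splits_of_retraction {G : Type*} [AddCommGroup G] (T : AddSubgroup G)
    (ρ : G →+ G) (h1 : ∀ g, ρ g ∈ T) (h2 : ∀ t ∈ T, ρ t = t) :
    ∃ H : AddSubgroup G, T ⊓ H = ⊥ ∧ T ⊔ H = ⊤ := by
  refine ⟨{ carrier := {g | ρ g = 0}
            zero_mem' := map_zero ρ
            add_mem' := by intro a b ha hb; simp only [Set.mem_setOf_eq] at *
                           rw [map_add, ha, hb, add_zero]
            neg_mem' := by intro a ha; simp only [Set.mem_setOf_eq] at *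
                           rw [map_neg, ha, neg_zero] }, ?_, ?_⟩
  · rw [eq_bot_iff]
    intro g hg
    obtain ⟨hgT, hgH⟩ := hg
    have : ρ g = g := h2 g hgT
    simp only [AddSubgroup.mem_mk, Set.mem_setOf_eq] at hgH
    rw [hgH] at this
    simpa using this.symm
  · rw [eq_top_iff]
    intro g _
    rw [AddSubgroup.mem_sup]
    refine ⟨ρ g, h1 g, g - ρ g, ?_, by abel⟩
    simp only [AddSubgroup.mem_mk, Set.mem_setOf_eq]
    show ρ (g - ρ g) = 0; rw [map_sub, h2 _ (h1 g), sub_self]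

/-- Over the field `ZMod q`, every "subgroup" (viewed as submodule) of a module admits an
additive projection onto it. -/
lemma zmod_proj_exists (q : ℕ) [Fact q.Prime] (Q : Type*) [AddCommGroup Q]
    [Module (ZMod q) Q] (W : AddSubgroup Q) :
    ∃ π : Q →+ Q, (∀ x, π x ∈ W) ∧ (∀ x ∈ W, π x = x) := by
  haveI : NeZero q := ⟨(Fact.out : q.Prime).ne_zero⟩
  have hsmulW : ∀ (c : ZMod q) (x : Q), x ∈ W → c • x ∈ W := by
    intro c x hx
    have : c • x = c.val • x := by
      rw [← Nat.cast_smul_eq_nsmul (ZMod q) c.val x, ZMod.natCast_val, ZMod.cast_id]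
    rw [this]
    exact AddSubgroup.nsmul_mem W hx c.val
  set Wsub : Submodule (ZMod q) Q :=
    { carrier := W
      add_mem' := fun ha hb => W.add_mem ha hb
      zero_mem' := W.zero_mem
      smul_mem' := fun c x hx => hsmulW c x hx } with hWsub
  obtain ⟨C, hC⟩ := Wsub.exists_isCompl
  set proj := Wsub.projectionOnto C hC with hproj
  refine ⟨(Wsub.subtype.comp proj).toAddMonoidHom, ?_, ?_⟩
  · intro x
    exact (proj x).2
  · intro x hx
    have := Submodule.linearProjOfIsCompl_apply_left hC ⟨x, hx⟩
    show ((proj x : Wsub) : Q) = x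
    rw [show proj x = proj ((⟨x, hx⟩ : Wsub) : Q) from rfl, this]

/-- Prime exponent case: if the torsion subgroup `T` satisfies `q • T = 0` for a prime `q`,
then `T` is a direct summand. -/
lemma prime_case (q : ℕ) (hq : q.Prime) (G : Type*) [AddCommGroup G]
    (T : AddSubgroup G) (hT : ∀ g : G, g ∈ T ↔ ∃ n : ℕ, 1 ≤ n ∧ n • g = 0)
    (hexp : ∀ t ∈ T, q • t = 0) :
    ∃ H : AddSubgroup G, T ⊓ H = ⊥ ∧ T ⊔ H = ⊤ := by
  -- the subgroup q • G
  set f : G →+ G := AddMonoidHom.mk' (fun g => q • g) (fun a b => smul_add q a b) with hf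
  set R : AddSubgroup G := f.range with hR
  set ψ : G →+ G ⧸ R := QuotientAddGroup.mk' R with hψ
  -- ψ is injective on T
  have hinj : ∀ t ∈ T, ψ t = 0 → t = 0 := by
    intro t ht h0
    rw [hψ, QuotientAddGroup.mk'_apply, QuotientAddGroup.eq_zero_iff] at h0
    obtain ⟨g, hg⟩ := h0
    simp only [hf, AddMonoidHom.mk'_apply] at hg
    obtain ⟨n, hn1, hn0⟩ := (hT t).1 ht
    have hgT : g ∈ T := by
      refine (hT g).2 ⟨n * q, ?_, ?_⟩
      · exact Nat.one_le_iff_ne_zero.2 (Nat.mul_ne_zero (by omega) hq.ne_zero)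
      · rw [mul_comm, mul_nsmul, hg, hn0]
    rw [← hg]
    exact hexp g hgT
  -- image of T in the quotient, and a projection onto it
  set W : AddSubgroup (G ⧸ R) := T.map ψ with hW
  letI instM : Module (ZMod q) (G ⧸ R) := QuotientAddGroup.zmodModule (fun x => ⟨x, rfl⟩)
  haveI instF : Fact q.Prime := ⟨hq⟩
  obtain ⟨πQ, hπ1, hπ2⟩ := @zmod_proj_exists q instF (G ⧸ R) _ instM W
  -- section: choose preimages in T
  have hsec : ∀ g : G, ∃ t : G, t ∈ T ∧ ψ t = πQ (ψ g) := by
    intro g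
    obtain ⟨t, ht, hte⟩ := AddSubgroup.mem_map.1 (hπ1 (ψ g))
    exact ⟨t, ht, hte⟩
  set ρfun : G → G := fun g => (hsec g).choose with hρfun
  have hρT : ∀ g, ρfun g ∈ T := fun g => (hsec g).choose_spec.1
  have hρψ : ∀ g, ψ (ρfun g) = πQ (ψ g) := fun g => (hsec g).choose_spec.2
  have hadd : ∀ a b : G, ρfun (a + b) = ρfun a + ρfun b := by
    intro a b
    have hmem : ρfun (a + b) - ρfun a - ρfun b ∈ T :=
      T.sub_mem (T.sub_mem (hρT _) (hρT _)) (hρT _)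
    have h0 : ψ (ρfun (a + b) - ρfun a - ρfun b) = 0 := by
      rw [map_sub, map_sub, hρψ, hρψ, hρψ, map_add, map_add]
      abel
    have h' := hinj _ hmem h0
    have h'' : ρfun (a + b) - (ρfun a + ρfun b) = 0 := by rw [← sub_sub]; exact h'
    exact sub_eq_zero.1 h''
  set ρ : G →+ G := AddMonoidHom.mk' ρfun hadd with hρ
  have h2 : ∀ t ∈ T, ρ t = t := by
    intro t ht
    have hmem : ρfun t - t ∈ T := T.sub_mem (hρT t) ht
    have h0 : ψ (ρfun t - t) = 0 := by
      rw [map_sub, hρψ, hπ2 (ψ t) (AddSubgroup.mem_map.2 ⟨t, ht, rfl⟩), sub_self]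
    have := hinj _ hmem h0
    have : ρfun t = t := by rwa [sub_eq_zero] at this
    simpa [hρ] using this
  exact splits_of_retraction T ρ (fun g => hρT g) h2

/-- Main induction: if the torsion subgroup `T` satisfies `m • T = 0` with `m ≥ 1`,
then `T` is a direct summand. -/
lemma key_lemma : ∀ (m : ℕ), 1 ≤ m → ∀ (G : Type u) [AddCommGroup G]
    (T : AddSubgroup G), (∀ g : G, g ∈ T ↔ ∃ n : ℕ, 1 ≤ n ∧ n • g = 0) →
    (∀ t ∈ T, m • t = 0) →
    ∃ H : AddSubgroup G, T ⊓ H = ⊥ ∧ T ⊔ H = ⊤ := by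
  intro m
  induction m using Nat.strong_induction_on with
  | _ m IH =>
    intro hm G _ T hT hexp
    rcases eq_or_ne m 1 with h1 | h1
    · -- m = 1 : T = ⊥
      have hbot : T = ⊥ := by
        rw [eq_bot_iff]
        intro t ht
        have := hexp t ht
        rw [h1, one_nsmul] at this
        simpa using this
      exact ⟨⊤, by rw [inf_top_eq, hbot], by rw [top_le_iff.1 le_sup_right]⟩
    · have hm2 : 2 ≤ m := by omega
      set q := m.minFac with hqdef
      have hqp : q.Prime := Nat.minFac_prime h1
      rcases eq_or_ne m q with hmq | hmq
      · -- m itself prime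
        exact prime_case q hqp G T hT (fun t ht => by rw [← hmq]; exact hexp t ht)
      · -- m = q * m', recurse
        have hdvd : q ∣ m := Nat.minFac_dvd m
        set m' := m / q with hm'def
        have hqm' : q * m' = m := Nat.mul_div_cancel' hdvd
        have hq2 : 2 ≤ q := hqp.two_le
        have hm'pos : 1 ≤ m' := by
          rcases Nat.eq_zero_or_pos m' with h | h
          · rw [h, mul_zero] at hqm'; omega
          · exact h
        have hm'lt : m' < m := by
          calc m' < 2 * m' := by omega
          _ ≤ q * m' := Nat.mul_le_mul_right m' hq2
          _ = m := hqm'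
        -- the q-torsion subgroup
        set Tq : AddSubgroup G :=
          { carrier := {g | q • g = 0}
            zero_mem' := smul_zero q
            add_mem' := by intro a b ha hb; simp only [Set.mem_setOf_eq] at *
                           rw [smul_add, ha, hb, add_zero]
            neg_mem' := by intro a ha; simp only [Set.mem_setOf_eq] at *
                           rw [smul_neg, ha, neg_zero] } with hTq
        have hTqmem : ∀ g : G, g ∈ Tq ↔ q • g = 0 := fun g => Iff.rfl
        have hTqT : Tq ≤ T := by
          intro g hg
          exact (hT g).2 ⟨q, by omega, (hTqmem g).1 hg⟩
        set Qt := G ⧸ Tq with hQt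
        set π : G →+ Qt := QuotientAddGroup.mk' Tq with hπ
        set Tbar : AddSubgroup Qt := T.map π with hTbar
        have hTbar_tors : ∀ x : Qt, x ∈ Tbar ↔ ∃ n : ℕ, 1 ≤ n ∧ n • x = 0 := by
          intro x
          constructor
          · rintro ⟨t, ht, rfl⟩
            obtain ⟨n, hn1, hn0⟩ := (hT t).1 ht
            exact ⟨n, hn1, by rw [← map_nsmul, hn0, map_zero]⟩
          · rintro ⟨n, hn1, hn0⟩
            obtain ⟨g, rfl⟩ := QuotientAddGroup.mk'_surjective Tq x
            have hn0' : (QuotientAddGroup.mk' Tq) (n • g) = 0 := by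
              rw [map_nsmul]; exact hn0
            rw [QuotientAddGroup.mk'_apply, QuotientAddGroup.eq_zero_iff] at hn0'
            have hg0 : q • n • g = 0 := (hTqmem _).1 hn0'
            have hgT : g ∈ T := by
              refine (hT g).2 ⟨q * n, Nat.one_le_iff_ne_zero.2
                (Nat.mul_ne_zero hqp.ne_zero (by omega)), ?_⟩
              rw [mul_nsmul, smul_comm]
              exact hg0
            exact ⟨g, hgT, rfl⟩
        have hTbar_exp : ∀ x ∈ Tbar, m' • x = 0 := by
          rintro x ⟨t, ht, rfl⟩
          rw [← map_nsmul, hπ, QuotientAddGroup.mk'_apply, QuotientAddGroup.eq_zero_iff]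
          refine (hTqmem _).2 ?_
          rw [← mul_nsmul, mul_comm m' q, hqm']
          exact hexp t ht
        obtain ⟨Hbar, hbb, hbt⟩ := IH m' hm'lt hm'pos Qt Tbar hTbar_tors hTbar_exp
        set H0 : AddSubgroup G := Hbar.comap π with hH0
        -- T ∩ H0 is killed by q
        have hTH0q : ∀ g : G, g ∈ T → g ∈ H0 → q • g = 0 := by
          intro g hgT hgH
          have hmem : π g ∈ Tbar ⊓ Hbar := ⟨⟨g, hgT, rfl⟩, hgH⟩
          rw [hbb] at hmem
          have : π g = 0 := hmem
          rw [hπ, QuotientAddGroup.mk'_apply, QuotientAddGroup.eq_zero_iff] at this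
          exact (hTqmem g).1 this
        -- G = T + H0
        have hsupH0 : ∀ g : G, ∃ t ∈ T, ∃ h ∈ H0, t + h = g := by
          intro g
          have : π g ∈ Tbar ⊔ Hbar := by rw [hbt]; trivial
          rw [AddSubgroup.mem_sup] at this
          obtain ⟨x, hx, y, hy, hxy⟩ := this
          obtain ⟨t, ht, rfl⟩ := hx
          refine ⟨t, ht, g - t, ?_, by abel⟩
          have : π (g - t) = y := by rw [map_sub, ← hxy]; abel
          rw [hH0, AddSubgroup.mem_comap, this]
          exact hy
        -- apply the prime case to H0
        set T' : AddSubgroup H0 := T.comap H0.subtype with hT'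
        have hT'mem : ∀ x : H0, x ∈ T' ↔ (x : G) ∈ T := fun x => Iff.rfl
        have hT'tors : ∀ x : H0, x ∈ T' ↔ ∃ n : ℕ, 1 ≤ n ∧ n • x = 0 := by
          intro x
          rw [hT'mem, hT (x : G)]
          constructor
          · rintro ⟨n, hn1, hn0⟩
            refine ⟨n, hn1, ?_⟩
            ext
            simpa using hn0
          · rintro ⟨n, hn1, hn0⟩
            refine ⟨n, hn1, ?_⟩
            have := congrArg (fun z : H0 => (z : G)) hn0
            simpa using this
        have hT'exp : ∀ x ∈ T', q • x = 0 := by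
          intro x hx
          have : q • (x : G) = 0 := hTH0q (x : G) ((hT'mem x).1 hx) x.2
          ext
          simpa using this
        obtain ⟨K', hkb, hkt⟩ := prime_case q hqp H0 T' hT'tors hT'exp
        set K : AddSubgroup G := K'.map H0.subtype with hK
        refine ⟨K, ?_, ?_⟩
        · rw [eq_bot_iff]
          rintro g ⟨hgT, hgK⟩
          obtain ⟨y, hy, rfl⟩ := hgK
          have hyT' : y ∈ T' := (hT'mem y).2 hgT
          have : y ∈ T' ⊓ K' := ⟨hyT', hy⟩
          rw [hkb] at this
          have : y = 0 := this
          simp [this]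
        · rw [eq_top_iff]
          intro g _
          obtain ⟨t, ht, h, hh, hth⟩ := hsupH0 g
          have : (⟨h, hh⟩ : H0) ∈ T' ⊔ K' := by rw [hkt]; trivial
          rw [AddSubgroup.mem_sup] at this
          obtain ⟨s, hs, k, hk, hsk⟩ := this
          rw [AddSubgroup.mem_sup]
          refine ⟨t + (s : G), T.add_mem ht ((hT'mem s).1 hs), (k : G),
            ⟨k, hk, rfl⟩, ?_⟩
          have : (s : G) + (k : G) = h := by
            have := congrArg (fun z : H0 => (z : G)) hsk
            simpa using this
          rw [← hth, ← this]
          abel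

/-- Let `G` be an abelian group whose torsion subgroup `T` has finite
exponent, i.e. there exists `m ≥ 1` with `m • t = 0` for all `t ∈ T`.  Then `T` is a
direct summand of `G`: there is a subgroup `H ≤ G` with `T ⊓ H = ⊥` and `T ⊔ H = ⊤`. -/
theorem torsion_subgroup_direct_summand_of_finite_exponent
    (G : Type*) [AddCommGroup G]
    (T : AddSubgroup G) (hT : ∀ g : G, g ∈ T ↔ ∃ n : ℕ, 1 ≤ n ∧ n • g = 0)
    (m : ℕ) (hm : 1 ≤ m) (hexp : ∀ t ∈ T, m • t = 0) :
    ∃ H : AddSubgroup G, T ⊓ H = ⊥ ∧ T ⊔ H = ⊤ := by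
  exact key_lemma m hm G T hT hexp
end

section
/- Let 0 → B → C → D → 0 be a short exact sequence of abelian groups, i.e. there are group homomorphisms ι : B → C and π : C → D with ι injective, π surjective, and ker π = im ι. Suppose B is finite and D is divisible. Then there exist subgroups M and F of C such that C is the internal direct sum of M and F (M ∩ F = 0 and M + F = C), M is divisible, F is finite, and F is isomorphic to a quotient group of B. -/
/-- Let `0 → B → C → D → 0` be a short exact sequence of abelian groups
with `B` finite and `D` divisible.  Then `C` is the internal direct sum of a divisible
subgroup `M` and a finite subgroup `F`, where `F` is isomorphic to a quotient group of
`B`. -/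
theorem exact_seq_finite_divisible_splits
    (B C D : Type*) [AddCommGroup B] [AddCommGroup C] [AddCommGroup D]
    [Finite B]
    (hdiv : ∀ d : D, ∀ m : ℕ, 1 ≤ m → ∃ e : D, m • e = d)
    (ι : B →+ C) (π : C →+ D)
    (hι : Function.Injective ι) (hπ : Function.Surjective π)
    (hexact : π.ker = ι.range) :
    ∃ M F : AddSubgroup C,
      M ⊓ F = ⊥ ∧ M ⊔ F = ⊤ ∧
      (∀ x ∈ M, ∀ m : ℕ, 1 ≤ m → ∃ y ∈ M, m • y = x) ∧
      Finite F ∧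
      ∃ K : AddSubgroup B, Nonempty ((B ⧸ K) ≃+ F) := by
  classical
  set n : ℕ := Nat.card B with hn
  have hn1 : 1 ≤ n := Nat.one_le_iff_ne_zero.mpr (Nat.card_ne_zero.mpr ⟨⟨0⟩, ‹Finite B›⟩)
  have hnB : ∀ b : B, n • b = 0 := fun b => card_nsmul_eq_zero'
  -- M := n • C
  set M : AddSubgroup C := (n • (AddMonoidHom.id C)).range with hM
  have hmemM : ∀ x : C, x ∈ M ↔ ∃ c : C, n • c = x := by
    intro x
    simp [hM, AddMonoidHom.mem_range]
  -- key lemma: anything divisible-up-to-B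
  have key : ∀ c : C, ∀ m : ℕ, 1 ≤ m → ∃ c' : C, ∃ b : B, c = m • c' + ι b := by
    intro c m hm
    obtain ⟨e, he⟩ := hdiv (π c) m hm
    obtain ⟨c', hc'⟩ := hπ e
    have : c - m • c' ∈ π.ker := by
      simp [AddMonoidHom.mem_ker, map_nsmul, hc', he]
    rw [hexact] at this
    obtain ⟨b, hb⟩ := this
    exact ⟨c', b, by rw [hb]; abel⟩
  -- M is divisible
  have hMdiv : ∀ x ∈ M, ∀ m : ℕ, 1 ≤ m → ∃ y ∈ M, m • y = x := by
    intro x hx m hm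
    obtain ⟨c, hc⟩ := (hmemM x).mp hx
    obtain ⟨c', b, hcb⟩ := key c m hm
    refine ⟨n • c', (hmemM _).mpr ⟨c', rfl⟩, ?_⟩
    have : n • c = n • (m • c') + n • (ι b) := by rw [hcb, nsmul_add]
    rw [← map_nsmul, hnB b, map_zero, add_zero] at this
    rw [← hc, this, smul_comm]
  -- M ⊔ ι.range = ⊤
  have hsup : M ⊔ ι.range = ⊤ := by
    rw [eq_top_iff]
    intro c _
    obtain ⟨c', b, hcb⟩ := key c n hn1
    rw [hcb]
    exact AddSubgroup.add_mem_sup ((hmemM _).mpr ⟨c', rfl⟩) ⟨b, rfl⟩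
  -- M is divisible as a type, hence Baer, hence a retraction exists
  haveI : DivisibleBy M ℕ := by
    refine divisibleByOfSMulRightSurj M ℕ ?_
    intro m hm ⟨x, hx⟩
    obtain ⟨y, hy, hyx⟩ := hMdiv x hx m (Nat.one_le_iff_ne_zero.mpr hm)
    exact ⟨⟨y, hy⟩, Subtype.ext (by simpa using hyx)⟩
  haveI : DivisibleBy M ℤ := AddGroup.divisibleByIntOfDivisibleByNat M
  obtain ⟨r, hr⟩ := (Module.Baer.of_divisible M).extension_property_addMonoidHom
    M.subtype Subtype.coe_injective (AddMonoidHom.id M)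
  have hrM : ∀ x : M, r (x : C) = x := fun x => DFunLike.congr_fun hr x
  -- F := kernel of the retraction
  set F : AddSubgroup C := (M.subtype.comp r).ker with hF
  have hmemF : ∀ x : C, x ∈ F ↔ (r x : C) = 0 := by
    intro x; simp [hF, AddMonoidHom.mem_ker]
  have hinf : M ⊓ F = ⊥ := by
    rw [eq_bot_iff]
    rintro x ⟨hxM, hxF⟩
    have := hrM ⟨x, hxM⟩
    have hx0 : (r x : C) = 0 := (hmemF x).mp hxF
    simpa [hx0] using congrArg (Subtype.val) this.symm
  have hsupF : M ⊔ F = ⊤ := by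
    rw [eq_top_iff]
    intro c _
    have hcF : c - (r c : C) ∈ F := by
      rw [hmemF, map_sub]
      have := hrM (r c)
      rw [this]
      simp
    have : c = (r c : C) + (c - (r c : C)) := by abel
    rw [this]
    exact AddSubgroup.add_mem_sup (r c).2 hcF
  -- the projection C → F with kernel M
  have hψ : ∀ c : C, c - (r c : C) ∈ F := by
    intro c
    rw [hmemF, map_sub]
    rw [hrM (r c)]
    simp
  let ψ : C →+ F :=
    { toFun := fun c => ⟨c - (r c : C), hψ c⟩
      map_zero' := by simp
      map_add' := fun a b => by
        ext
        push_cast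
        rw [map_add]
        push_cast
        abel }
  have hψsurj : Function.Surjective ψ := by
    rintro ⟨x, hx⟩
    refine ⟨x, Subtype.ext ?_⟩
    simp [ψ, (hmemF x).mp hx]
  have hψker : ψ.ker = M := by
    ext c
    constructor
    · intro hc
      have : c - (r c : C) = 0 := congrArg Subtype.val hc
      have : c = (r c : C) := by linear_combination (norm := abel) this
      rw [this]; exact (r c).2
    · intro hc
      have : r c = ⟨c, hc⟩ := hrM ⟨c, hc⟩
      apply Subtype.ext
      simp [ψ, this]
  -- quotient isomorphisms
  let e1 : C ⧸ ψ.ker ≃+ F := QuotientAddGroup.quotientKerEquivOfSurjective ψ hψsurj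
  -- map B → C ⧸ M
  let φ : B →+ C ⧸ ψ.ker := (QuotientAddGroup.mk' ψ.ker).comp ι
  have hφsurj : Function.Surjective φ := by
    intro q
    obtain ⟨c, rfl⟩ := QuotientAddGroup.mk'_surjective ψ.ker q
    have hc : c ∈ M ⊔ ι.range := by rw [hsup]; trivial
    obtain ⟨x, hxM, y, ⟨b, rfl⟩, hxy⟩ := AddSubgroup.mem_sup.mp hc
    refine ⟨b, ?_⟩
    have : (QuotientAddGroup.mk' ψ.ker) (ι b) = (QuotientAddGroup.mk' ψ.ker) c := by
      rw [QuotientAddGroup.mk'_eq_mk']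
      refine ⟨x, ?_, by rw [← hxy]; abel⟩
      rw [hψker]; exact hxM
    exact this
  let e2 : B ⧸ φ.ker ≃+ C ⧸ ψ.ker := QuotientAddGroup.quotientKerEquivOfSurjective φ hφsurj
  have : Finite (B ⧸ φ.ker) := Quotient.finite _
  have hFfin : Finite F := Finite.of_equiv _ (e2.trans e1).toEquiv
  exact ⟨M, F, hinf, hsupF, hMdiv, hFfin, φ.ker, ⟨e2.trans e1⟩⟩
end

section
/- Let A be a commutative, Noetherian, reduced ring of Krull dimension one with normalization B = Ã. Suppose there exists an ideal I of B which, under the inclusion A ⊆ B, is contained in A, and which is not contained in any minimal prime ideal of B. Then B is a finitely generated A-module. -/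
set_option synthInstance.maxHeartbeats 1000000
set_option maxHeartbeats 1000000

/-- Auxiliary lemma: if `B` is a subalgebra of `K` over a Noetherian reduced ring `A`,
where `A → K` is injective and sends non-zero-divisors to units, and `I` is an ideal of
`B` contained in the image of `A` and in no minimal prime of `B`, then `B` is module
finite over `A`. -/
theorem aux_normalization_finite
    (A K : Type*) [CommRing A] [CommRing K] [Algebra A K]
    [IsNoetherianRing A] [IsReduced A]
    (hinjK : Function.Injective (algebraMap A K))
    (hunit : ∀ x ∈ nonZeroDivisors A, IsUnit (algebraMap A K x))
    (B : Subalgebra A K)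
    (I : Ideal B)
    (hIA : ∀ x ∈ I, (x : K) ∈ Set.range (algebraMap A K))
    (hmin : ∀ P ∈ minimalPrimes B, ¬ I ≤ P) :
    Module.Finite A B := by
  classical
  have hcomp : ∀ a : A, ((algebraMap A B a : B) : K) = algebraMap A K a := fun a => rfl
  have hinjB : Function.Injective (algebraMap A B) := by
    intro a b hab
    apply hinjK
    rw [← hcomp, ← hcomp, hab]
  -- the ideal of `A` corresponding to `I`
  set J : Ideal A := I.comap (algebraMap A B) with hJ
  -- `J` is not contained in any minimal prime of `A`
  have hJmin : ∀ p ∈ minimalPrimes A, ¬ J ≤ p := by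
    intro p hp hJp
    have hker : (⊥ : Ideal B).comap (algebraMap A B) = ⊥ := by
      rw [← RingHom.ker, ← RingHom.injective_iff_ker_eq_bot]
      exact hinjB
    have hp' : p ∈ ((⊥ : Ideal B).comap (algebraMap A B)).minimalPrimes := by
      rwa [hker]
    obtain ⟨Q, hQ, hQp⟩ := Ideal.exists_minimalPrimes_comap_eq (algebraMap A B) p hp'
    refine hmin Q hQ ?_
    intro x hx
    obtain ⟨a, ha⟩ := hIA x hx
    have hxa : algebraMap A B a = x := Subtype.ext (by rw [hcomp]; exact ha)
    have haJ : a ∈ J := by rw [hJ, Ideal.mem_comap, hxa]; exact hx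
    have hap : a ∈ p := hJp haJ
    rw [← hQp] at hap
    rwa [← hxa]
  -- `J` contains a non-zero-divisor of `A`
  have hfin : (minimalPrimes A).Finite := minimalPrimes.finite_of_isNoetherianRing A
  obtain ⟨x, hxJ, hxU⟩ : ∃ x ∈ J, x ∉ ⋃ p ∈ (hfin.toFinset : Set (Ideal A)), (p : Set A) := by
    by_contra h
    push_neg at h
    have hsub : (J : Set A) ⊆ ⋃ p ∈ (hfin.toFinset : Set (Ideal A)), (p : Set A) := fun y hy =>
      h y hy
    rw [Ideal.subset_union_prime ⊥ ⊥ (fun p hp _ _ => by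
      have : p ∈ minimalPrimes A := by simpa using hp
      exact this.1.1)] at hsub
    obtain ⟨p, hp, hle⟩ := hsub
    exact hJmin p (by simpa using hp) hle
  have hxnzd : x ∈ nonZeroDivisors A := by
    rw [mem_nonZeroDivisors_iff_right]
    intro z hz
    by_contra hz0
    -- since `A` is reduced, `z ∉ sInf (minimalPrimes A) = ⊥`
    have hrad : sInf (minimalPrimes A) = (⊥ : Ideal A) := by
      have h1 := Ideal.sInf_minimalPrimes (I := (⊥ : Ideal A))
      have h2 : (⊥ : Ideal A).radical = nilradical A := rfl
      rw [minimalPrimes, h1, h2, nilradical_eq_zero]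
      rfl
    have hznot : z ∉ sInf (minimalPrimes A) := by
      rw [hrad]; simpa using hz0
    rw [Ideal.mem_sInf] at hznot
    push_neg at hznot
    obtain ⟨p, hp, hzp⟩ := hznot
    have hxp : x ∈ p := by
      have : z * x ∈ p := by rw [hz]; exact p.zero_mem
      rcases (hp.1.1.mem_or_mem this) with h | h
      · exact absurd h hzp
      · exact h
    exact hxU (Set.mem_biUnion (by simpa using hp) hxp)
  -- the element `w = x` viewed in `B`; multiplication by `w` maps `B` into `A`
  set w : B := algebraMap A B x with hw
  have hwI : w ∈ I := hxJ
  have hwb : ∀ b : B, ∃ a : A, algebraMap A K a = ((w * b : B) : K) := by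
    intro b
    exact hIA _ (I.mul_mem_right b hwI)
  choose g hg using hwb
  -- `g` is an injective `A`-linear map `B → A`
  have hwunit : IsUnit (algebraMap A K x) := hunit x hxnzd
  have hginj : Function.Injective g := by
    intro b b' hbb'
    have h1 : ((w * b : B) : K) = ((w * b' : B) : K) := by
      rw [← hg b, ← hg b', hbb']
    have h2 : (algebraMap A K x) * (b : K) = (algebraMap A K x) * (b' : K) := by
      simpa [hw, hcomp] using h1
    have h3 : (b : K) = (b' : K) := hwunit.mul_left_cancel h2
    exact Subtype.ext h3
  have hgadd : ∀ b b' : B, g (b + b') = g b + g b' := by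
    intro b b'
    apply hinjK
    rw [map_add, hg, hg, hg, mul_add]
    push_cast
    ring
  have hgsmul : ∀ (a : A) (b : B), g (a • b) = a • g b := by
    intro a b
    apply hinjK
    rw [hg]
    have : (((w * (a • b) : B)) : K) = algebraMap A K a * ((w * b : B) : K) := by
      rw [Algebra.smul_def]
      push_cast
      rw [hcomp]
      ring
    rw [this, ← hg, Algebra.smul_def, map_mul]
    simp
  let G : B →ₗ[A] A :=
    { toFun := g
      map_add' := hgadd
      map_smul' := fun a b => by simp [hgsmul a b] }
  have : IsNoetherian A B := isNoetherian_of_injective G hginj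
  infer_instance

/-- Let `A` be a commutative, Noetherian, reduced ring of Krull
dimension one with normalization `B` (the integral closure of `A` in its total ring of
fractions).  If there is an ideal `I` of `B` which is contained in (the image of) `A`
and which is not contained in any minimal prime of `B`, then `B` is a finitely generated
`A`-module. -/
theorem normalization_finite_of_ideal_contained_in_base
    (A : Type*) [CommRing A] [IsNoetherianRing A] [IsReduced A]
    (hdim : ringKrullDim A = 1)
    (I : Ideal (integralClosure A (FractionRing A)))
    (hIA : ∀ x ∈ I, (x : FractionRing A) ∈ Set.range (algebraMap A (FractionRing A)))
    (hmin : ∀ P ∈ minimalPrimes (integralClosure A (FractionRing A)), ¬ I ≤ P) :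
    Module.Finite A (integralClosure A (FractionRing A)) :=
  aux_normalization_finite A (FractionRing A)
    (IsFractionRing.injective A (FractionRing A))
    (fun x hx => IsLocalization.map_units (FractionRing A) (⟨x, hx⟩ : nonZeroDivisors A))
    (integralClosure A (FractionRing A)) I hIA hmin
end

section
/- Let p be a prime number, K a field extension of ℚ_p which is finite-dimensional as a ℚ_p-vector space, 𝒪 the integral closure of ℤ_p in K, and 𝔭 the set of non-units of 𝒪 (which is the unique maximal ideal of the local ring 𝒪). For an integer s ≥ 1, let A := {z + y : z ∈ image of ℤ_p in 𝒪, y ∈ 𝔭^s}; then A is a subring of 𝒪, A is a local ring whose maximal ideal is 𝔪 = {z + y : z ∈ pℤ_p, y ∈ 𝔭^s} and whose residue field A/𝔪 has exactly p elements, the integral closure of A in K equals 𝒪, and 𝒪 is finite as an A-module. -/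
set_option synthInstance.maxHeartbeats 1000000
set_option maxHeartbeats 1000000

noncomputable section

/-- The subring `A = ℤ_p + 𝔭^s` of the ring of integers `𝒪` of a `p`-adic field. -/
def padicSubring (p : ℕ) [Fact p.Prime] (K : Type*) [Field K] [Algebra ℤ_[p] K]
    (𝔭 : Ideal (integralClosure ℤ_[p] K)) (s : ℕ) :
    Subring (integralClosure ℤ_[p] K) where
  carrier := {x | ∃ z : ℤ_[p], ∃ y ∈ 𝔭 ^ s,
    x = algebraMap ℤ_[p] (integralClosure ℤ_[p] K) z + y}
  zero_mem' := ⟨0, 0, Submodule.zero_mem _, by simp⟩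
  one_mem' := ⟨1, 0, Submodule.zero_mem _, by simp⟩
  add_mem' := by
    rintro a b ⟨z, y, hy, rfl⟩ ⟨z', y', hy', rfl⟩
    exact ⟨z + z', y + y', Submodule.add_mem _ hy hy', by rw [map_add]; ring⟩
  neg_mem' := by
    rintro a ⟨z, y, hy, rfl⟩
    exact ⟨-z, -y, Submodule.neg_mem _ hy, by rw [map_neg]; ring⟩
  mul_mem' := by
    rintro a b ⟨z, y, hy, rfl⟩ ⟨z', y', hy', rfl⟩
    refine ⟨z * z',
      algebraMap ℤ_[p] (integralClosure ℤ_[p] K) z * y' +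
        algebraMap ℤ_[p] (integralClosure ℤ_[p] K) z' * y + y * y', ?_,
      by rw [map_mul]; ring⟩
    exact Submodule.add_mem _
      (Submodule.add_mem _ (Ideal.mul_mem_left _ _ hy') (Ideal.mul_mem_left _ _ hy))
      (Ideal.mul_mem_left _ _ hy')

instance (p : ℕ) [Fact p.Prime] (K : Type*) [Field K] [Algebra ℤ_[p] K]
    (𝔭 : Ideal (integralClosure ℤ_[p] K)) (s : ℕ) :
    Algebra (padicSubring p K 𝔭 s) K :=
  ((algebraMap (integralClosure ℤ_[p] K) K).comp (padicSubring p K 𝔭 s).subtype).toAlgebra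

section PadicAux

variable {p : ℕ} [Fact p.Prime] {K : Type*} [Field K] [Algebra ℚ_[p] K]
  [Algebra ℤ_[p] K] [IsScalarTower ℤ_[p] ℚ_[p] K]

lemma padicAux_isUnit {z : ℤ_[p]}
    (h : IsUnit (algebraMap ℤ_[p] (integralClosure ℤ_[p] K) z)) : IsUnit z := by
  obtain ⟨u, hu⟩ := h
  set b : integralClosure ℤ_[p] K := ((u⁻¹ : _ˣ) : integralClosure ℤ_[p] K) with hbdef
  have hmul : algebraMap ℤ_[p] (integralClosure ℤ_[p] K) z * b = 1 := by
    rw [← hu]; exact u.mul_inv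
  have hK : algebraMap ℚ_[p] K (z : ℚ_[p]) * (b : K) = 1 := by
    have h2 := congrArg (algebraMap (integralClosure ℤ_[p] K) K) hmul
    rw [map_mul, map_one, ← IsScalarTower.algebraMap_apply,
      IsScalarTower.algebraMap_apply ℤ_[p] ℚ_[p] K, PadicInt.algebraMap_apply] at h2
    exact h2
  have hz0 : (z : ℚ_[p]) ≠ 0 := by
    intro h0
    rw [h0, map_zero, zero_mul] at hK
    exact zero_ne_one hK
  have ha0 : algebraMap ℚ_[p] K (z : ℚ_[p]) ≠ 0 := by
    simpa using hz0
  have hb : (b : K) = algebraMap ℚ_[p] K ((z : ℚ_[p])⁻¹) := by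
    rw [map_inv₀]
    exact mul_left_cancel₀ ha0 (by rw [hK, mul_inv_cancel₀ ha0])
  have hbi : IsIntegral ℤ_[p] (algebraMap ℚ_[p] K ((z : ℚ_[p])⁻¹)) := hb ▸ b.2
  have hint : IsIntegral ℤ_[p] ((z : ℚ_[p])⁻¹) :=
    IsIntegral.tower_bot (algebraMap ℚ_[p] K).injective hbi
  obtain ⟨w, hw⟩ := IsIntegrallyClosed.isIntegral_iff.mp hint
  rw [PadicInt.algebraMap_apply] at hw
  refine IsUnit.of_mul_eq_one (a := z) w ?_
  have : ((z * w : ℤ_[p]) : ℚ_[p]) = 1 := by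
    push_cast
    rw [hw, mul_inv_cancel₀ hz0]
  exact Subtype.coe_injective (by push_cast at this ⊢; rw [this])

section WithIdeal

variable (𝔭 : Ideal (integralClosure ℤ_[p] K))
  (h𝔭 : ∀ x : integralClosure ℤ_[p] K, x ∈ 𝔭 ↔ x ∈ nonunits (integralClosure ℤ_[p] K))

include h𝔭

lemma padicAux_p_mem : algebraMap ℤ_[p] (integralClosure ℤ_[p] K) (p : ℤ_[p]) ∈ 𝔭 := by
  rw [h𝔭, mem_nonunits_iff]
  intro h
  exact PadicInt.p_nonunit (padicAux_isUnit h)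

lemma padicAux_mem_span {z : ℤ_[p]}
    (h : algebraMap ℤ_[p] (integralClosure ℤ_[p] K) z ∈ 𝔭) :
    z ∈ Ideal.span {(p : ℤ_[p])} := by
  rw [← PadicInt.maximalIdeal_eq_span_p, IsLocalRing.mem_maximalIdeal, mem_nonunits_iff]
  intro hunit
  exact mem_nonunits_iff.mp ((h𝔭 _).mp h)
    (hunit.map (algebraMap ℤ_[p] (integralClosure ℤ_[p] K)))

lemma padicAux_span_mem {z : ℤ_[p]} (hz : z ∈ Ideal.span {(p : ℤ_[p])}) :
    algebraMap ℤ_[p] (integralClosure ℤ_[p] K) z ∈ 𝔭 := by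
  obtain ⟨c, rfl⟩ := Ideal.mem_span_singleton'.mp hz
  rw [map_mul]
  exact Ideal.mul_mem_left _ _ (padicAux_p_mem 𝔭 h𝔭)

lemma padicAux_isUnit_of_rep {s : ℕ} (hs : 1 ≤ s) {a : padicSubring p K 𝔭 s} {z : ℤ_[p]}
    {y : integralClosure ℤ_[p] K} (hy : y ∈ 𝔭 ^ s)
    (ha : (a : integralClosure ℤ_[p] K) = algebraMap ℤ_[p] (integralClosure ℤ_[p] K) z + y)
    (hz : IsUnit z) : IsUnit a := by
  obtain ⟨u, rfl⟩ := hz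
  have hy𝔭 : y ∈ 𝔭 := Ideal.pow_le_self (Nat.one_le_iff_ne_zero.mp hs) hy
  have hzu : IsUnit (algebraMap ℤ_[p] (integralClosure ℤ_[p] K) (u : ℤ_[p])) :=
    (Units.isUnit u).map _
  have ha𝒪 : IsUnit (a : integralClosure ℤ_[p] K) := by
    by_contra h
    have hmem : (a : integralClosure ℤ_[p] K) ∈ 𝔭 := (h𝔭 _).mpr h
    have : algebraMap ℤ_[p] (integralClosure ℤ_[p] K) (u : ℤ_[p]) ∈ 𝔭 := by
      have := Ideal.sub_mem _ hmem hy𝔭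
      rwa [ha, add_sub_cancel_right] at this
    exact mem_nonunits_iff.mp ((h𝔭 _).mp this) hzu
  obtain ⟨v, hv⟩ := ha𝒪
  set b : integralClosure ℤ_[p] K := ((v⁻¹ : _ˣ) : integralClosure ℤ_[p] K) with hbdef
  have hab : (a : integralClosure ℤ_[p] K) * b = 1 := by rw [← hv]; exact v.mul_inv
  set t : integralClosure ℤ_[p] K :=
    algebraMap ℤ_[p] (integralClosure ℤ_[p] K) ((u⁻¹ : _ˣ) : ℤ_[p]) with htdef
  have h1 : algebraMap ℤ_[p] (integralClosure ℤ_[p] K) (u : ℤ_[p]) * t = 1 := by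
    rw [htdef, ← map_mul, u.mul_inv, map_one]
  have hcomb : (algebraMap ℤ_[p] (integralClosure ℤ_[p] K) (u : ℤ_[p]) + y) * b = 1 := by
    rw [← ha]; exact hab
  have hbrep : b = t + -(t * y * b) := by linear_combination t * hcomb - b * h1
  have hbmem : b ∈ padicSubring p K 𝔭 s :=
    ⟨((u⁻¹ : _ˣ) : ℤ_[p]), -(t * y * b),
      Submodule.neg_mem _ (Ideal.mul_mem_right _ _ (Ideal.mul_mem_left _ _ hy)), hbrep⟩
  exact IsUnit.of_mul_eq_one (a := a) ⟨b, hbmem⟩ (Subtype.ext hab)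

lemma padicAux_not_isUnit_of_rep {s : ℕ} (hs : 1 ≤ s) {a : padicSubring p K 𝔭 s} {z : ℤ_[p]}
    {y : integralClosure ℤ_[p] K} (hy : y ∈ 𝔭 ^ s)
    (ha : (a : integralClosure ℤ_[p] K) = algebraMap ℤ_[p] (integralClosure ℤ_[p] K) z + y)
    (hz : z ∈ Ideal.span {(p : ℤ_[p])}) : ¬ IsUnit a := by
  intro h
  have h𝒪 : IsUnit (a : integralClosure ℤ_[p] K) := h.map (padicSubring p K 𝔭 s).subtype
  have hmem : (a : integralClosure ℤ_[p] K) ∈ 𝔭 := by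
    rw [ha]
    exact Ideal.add_mem _ (padicAux_span_mem 𝔭 h𝔭 hz)
      (Ideal.pow_le_self (Nat.one_le_iff_ne_zero.mp hs) hy)
  exact mem_nonunits_iff.mp ((h𝔭 _).mp hmem) h𝒪

end WithIdeal

end PadicAux

/-- Let `K` be a finite extension of `ℚ_p` with ring of integers `𝒪`
(the integral closure of `ℤ_p` in `K`) and let `𝔭` be the ideal of non-units of `𝒪`.
For `s ≥ 1`, the set `A = ℤ_p + 𝔭^s` is a subring of `𝒪`; it is a local ring with
maximal ideal `pℤ_p + 𝔭^s`, its residue field has exactly `p` elements, the integral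
closure of `A` in `K` is `𝒪`, and `𝒪` is finite as an `A`-module. -/
theorem padicSubring_local_with_finite_normalization
    (p : ℕ) [Fact p.Prime]
    (K : Type*) [Field K] [Algebra ℚ_[p] K] [FiniteDimensional ℚ_[p] K]
    [Algebra ℤ_[p] K] [IsScalarTower ℤ_[p] ℚ_[p] K]
    (𝔭 : Ideal (integralClosure ℤ_[p] K))
    (h𝔭 : ∀ x : integralClosure ℤ_[p] K, x ∈ 𝔭 ↔ x ∈ nonunits (integralClosure ℤ_[p] K))
    (s : ℕ) (hs : 1 ≤ s) :
    ∃ _hloc : IsLocalRing (padicSubring p K 𝔭 s),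
      (∀ x : padicSubring p K 𝔭 s,
        x ∈ IsLocalRing.maximalIdeal (padicSubring p K 𝔭 s) ↔
          ∃ z ∈ Ideal.span {(p : ℤ_[p])}, ∃ y ∈ 𝔭 ^ s,
            (x : integralClosure ℤ_[p] K) =
              algebraMap ℤ_[p] (integralClosure ℤ_[p] K) z + y) ∧
      Nat.card (IsLocalRing.ResidueField (padicSubring p K 𝔭 s)) = p ∧
      ((integralClosure (padicSubring p K 𝔭 s) K : Set K) =
        (integralClosure ℤ_[p] K : Set K)) ∧
      Module.Finite (padicSubring p K 𝔭 s) (integralClosure ℤ_[p] K) := by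
  classical
  have hmem : ∀ a : (padicSubring p K 𝔭 s), ∃ z : ℤ_[p], ∃ y ∈ 𝔭 ^ s,
      (a : (integralClosure ℤ_[p] K)) = (algebraMap ℤ_[p] (integralClosure ℤ_[p] K)) z + y := fun a => a.2
  set zof : (padicSubring p K 𝔭 s) → ℤ_[p] := fun a => (hmem a).choose with hzofdef
  have hzof : ∀ a : (padicSubring p K 𝔭 s), ∃ y ∈ 𝔭 ^ s, (a : (integralClosure ℤ_[p] K)) = (algebraMap ℤ_[p] (integralClosure ℤ_[p] K)) (zof a) + y :=
    fun a => (hmem a).choose_spec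
  have hspan_iff : ∀ z : ℤ_[p], z ∈ Ideal.span {(p : ℤ_[p])} ↔ PadicInt.toZMod z = 0 := by
    intro z
    rw [← RingHom.mem_ker, PadicInt.ker_toZMod, PadicInt.maximalIdeal_eq_span_p]
  have W : ∀ {z z' : ℤ_[p]} {y y' : (integralClosure ℤ_[p] K)}, y ∈ 𝔭 ^ s → y' ∈ 𝔭 ^ s →
      (algebraMap ℤ_[p] (integralClosure ℤ_[p] K)) z + y = (algebraMap ℤ_[p] (integralClosure ℤ_[p] K)) z' + y' → PadicInt.toZMod z = PadicInt.toZMod z' := by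
    intro z z' y y' hy hy' heq
    have hsub : (algebraMap ℤ_[p] (integralClosure ℤ_[p] K)) (z - z') = y' - y := by
      rw [map_sub]; linear_combination heq
    have hmem' : z - z' ∈ Ideal.span {(p : ℤ_[p])} :=
      padicAux_mem_span 𝔭 h𝔭 (hsub ▸ (Ideal.pow_le_self (Nat.one_le_iff_ne_zero.mp hs)
        (Submodule.sub_mem _ hy' hy)))
    have h0 : PadicInt.toZMod (z - z') = 0 := (hspan_iff _).mp hmem'
    rw [map_sub, sub_eq_zero] at h0
    exact h0
  have hNU : ∀ a : (padicSubring p K 𝔭 s), ¬ IsUnit a ↔ zof a ∈ Ideal.span {(p : ℤ_[p])} := by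
    intro a
    obtain ⟨y, hy, ha⟩ := hzof a
    constructor
    · intro h
      by_contra hz
      have hzu : IsUnit (zof a) := by
        by_contra hzu
        exact hz (by
          rw [← PadicInt.maximalIdeal_eq_span_p]
          exact (IsLocalRing.mem_maximalIdeal _).mpr hzu)
      exact h (padicAux_isUnit_of_rep 𝔭 h𝔭 hs hy ha hzu)
    · intro hz
      exact padicAux_not_isUnit_of_rep 𝔭 h𝔭 hs hy ha hz
  have hnontriv : Nontrivial (padicSubring p K 𝔭 s) := ⟨0, 1, fun h => by
    have h2 := congrArg (fun x : (padicSubring p K 𝔭 s) => ((x : (integralClosure ℤ_[p] K)) : K)) h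
    simpa using h2⟩
  have hloc : IsLocalRing (padicSubring p K 𝔭 s) := by
    refine IsLocalRing.of_nonunits_add ?_
    intro a b ha hb
    rw [mem_nonunits_iff] at ha hb ⊢
    obtain ⟨ya, hya, hha⟩ := hzof a
    obtain ⟨yb, hyb, hhb⟩ := hzof b
    refine padicAux_not_isUnit_of_rep 𝔭 h𝔭 hs (Submodule.add_mem _ hya hyb) ?_
      (Ideal.add_mem _ ((hNU a).mp ha) ((hNU b).mp hb))
    have hab : ((a + b : (padicSubring p K 𝔭 s)) : (integralClosure ℤ_[p] K)) = (a : (integralClosure ℤ_[p] K)) + (b : (integralClosure ℤ_[p] K)) := rfl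
    rw [hab, hha, hhb, map_add]; ring
  have hmax : ∀ x : (padicSubring p K 𝔭 s), x ∈ IsLocalRing.maximalIdeal (padicSubring p K 𝔭 s) ↔
      ∃ z ∈ Ideal.span {(p : ℤ_[p])}, ∃ y ∈ 𝔭 ^ s, (x : (integralClosure ℤ_[p] K)) = (algebraMap ℤ_[p] (integralClosure ℤ_[p] K)) z + y := by
    intro x
    rw [IsLocalRing.mem_maximalIdeal, mem_nonunits_iff, hNU x]
    constructor
    · intro h
      obtain ⟨y, hy, hx⟩ := hzof x
      exact ⟨zof x, h, y, hy, hx⟩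
    · rintro ⟨z, hzp, y, hy, hx⟩
      obtain ⟨y', hy', hx'⟩ := hzof x
      rw [hspan_iff] at hzp ⊢
      rw [W hy' hy (hx'.symm.trans hx)]
      exact hzp
  -- the residue map
  have hφone : PadicInt.toZMod (zof 1) = 1 := by
    obtain ⟨y, hy, h1⟩ := hzof (1 : (padicSubring p K 𝔭 s))
    have hw := W hy (Submodule.zero_mem _) (h1.symm.trans
      (show ((1 : (padicSubring p K 𝔭 s)) : (integralClosure ℤ_[p] K)) =
        (algebraMap ℤ_[p] (integralClosure ℤ_[p] K)) 1 + 0 by simp))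
    rwa [map_one] at hw
  have hφzero : PadicInt.toZMod (zof 0) = 0 := by
    obtain ⟨y, hy, h1⟩ := hzof (0 : (padicSubring p K 𝔭 s))
    have hw := W hy (Submodule.zero_mem _) (h1.symm.trans
      (show ((0 : (padicSubring p K 𝔭 s)) : (integralClosure ℤ_[p] K)) =
        (algebraMap ℤ_[p] (integralClosure ℤ_[p] K)) 0 + 0 by simp))
    rwa [map_zero] at hw
  have hφmul : ∀ a b : (padicSubring p K 𝔭 s), PadicInt.toZMod (zof (a * b)) =
      PadicInt.toZMod (zof a) * PadicInt.toZMod (zof b) := by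
    intro a b
    obtain ⟨ya, hya, hha⟩ := hzof a
    obtain ⟨yb, hyb, hhb⟩ := hzof b
    obtain ⟨yc, hyc, hhc⟩ := hzof (a * b)
    have hmem2 : (algebraMap ℤ_[p] (integralClosure ℤ_[p] K)) (zof a) * yb + (algebraMap ℤ_[p] (integralClosure ℤ_[p] K)) (zof b) * ya + ya * yb ∈ 𝔭 ^ s :=
      Submodule.add_mem _
        (Submodule.add_mem _ (Ideal.mul_mem_left _ _ hyb) (Ideal.mul_mem_left _ _ hya))
        (Ideal.mul_mem_left _ _ hyb)
    have heq : (algebraMap ℤ_[p] (integralClosure ℤ_[p] K)) (zof (a * b)) + yc = (algebraMap ℤ_[p] (integralClosure ℤ_[p] K)) (zof a * zof b) +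
        ((algebraMap ℤ_[p] (integralClosure ℤ_[p] K)) (zof a) * yb + (algebraMap ℤ_[p] (integralClosure ℤ_[p] K)) (zof b) * ya + ya * yb) := by
      rw [← hhc, map_mul]
      have habv : ((a * b : (padicSubring p K 𝔭 s)) : (integralClosure ℤ_[p] K)) = (a : (integralClosure ℤ_[p] K)) * (b : (integralClosure ℤ_[p] K)) := rfl
      rw [habv, hha, hhb]; ring
    rw [W hyc hmem2 heq, map_mul]
  have hφadd : ∀ a b : (padicSubring p K 𝔭 s), PadicInt.toZMod (zof (a + b)) =
      PadicInt.toZMod (zof a) + PadicInt.toZMod (zof b) := by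
    intro a b
    obtain ⟨ya, hya, hha⟩ := hzof a
    obtain ⟨yb, hyb, hhb⟩ := hzof b
    obtain ⟨yc, hyc, hhc⟩ := hzof (a + b)
    have heq : (algebraMap ℤ_[p] (integralClosure ℤ_[p] K)) (zof (a + b)) + yc = (algebraMap ℤ_[p] (integralClosure ℤ_[p] K)) (zof a + zof b) + (ya + yb) := by
      rw [← hhc, map_add]
      have habv : ((a + b : (padicSubring p K 𝔭 s)) : (integralClosure ℤ_[p] K)) = (a : (integralClosure ℤ_[p] K)) + (b : (integralClosure ℤ_[p] K)) := rfl
      rw [habv, hha, hhb]; ring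
    rw [W hyc (Submodule.add_mem _ hya hyb) heq, map_add]
  let φ : (padicSubring p K 𝔭 s) →+* ZMod p :=
    { toFun := fun a => PadicInt.toZMod (zof a)
      map_one' := hφone
      map_mul' := hφmul
      map_zero' := hφzero
      map_add' := hφadd }
  have hker : RingHom.ker φ = IsLocalRing.maximalIdeal (padicSubring p K 𝔭 s) := by
    ext a
    rw [RingHom.mem_ker, hmax a]
    show PadicInt.toZMod (zof a) = 0 ↔ _
    constructor
    · intro h
      obtain ⟨y, hy, hx⟩ := hzof a
      exact ⟨zof a, (hspan_iff _).mpr h, y, hy, hx⟩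
    · rintro ⟨z, hzp, y, hy, hx⟩
      obtain ⟨y', hy', hx'⟩ := hzof a
      rw [W hy' hy (hx'.symm.trans hx)]
      exact (hspan_iff _).mp hzp
  have hsurj : Function.Surjective φ := by
    intro c
    refine ⟨((c.val : ℕ) : (padicSubring p K 𝔭 s)), ?_⟩
    rw [map_natCast]
    exact ZMod.natCast_rightInverse c
  have hcard : Nat.card (IsLocalRing.ResidueField (padicSubring p K 𝔭 s)) = p := by
    have e := RingHom.quotientKerEquivOfSurjective hsurj
    replace e := (Ideal.quotEquivOfEq hker).symm.trans e
    exact (Nat.card_congr e.toEquiv).trans (Nat.card_zmod p)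
  -- the inclusion ring hom ℤ_[p] →+* A
  let ι : ℤ_[p] →+* (padicSubring p K 𝔭 s) :=
    { toFun := fun z => ⟨(algebraMap ℤ_[p] (integralClosure ℤ_[p] K)) z, z, 0, Submodule.zero_mem _, by simp⟩
      map_one' := Subtype.ext (map_one (algebraMap ℤ_[p] (integralClosure ℤ_[p] K)))
      map_mul' := fun a b => Subtype.ext (map_mul (algebraMap ℤ_[p] (integralClosure ℤ_[p] K)) a b)
      map_zero' := Subtype.ext (map_zero (algebraMap ℤ_[p] (integralClosure ℤ_[p] K)))
      map_add' := fun a b => Subtype.ext (map_add (algebraMap ℤ_[p] (integralClosure ℤ_[p] K)) a b) }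
  have hIC : (integralClosure (padicSubring p K 𝔭 s) K : Set K) = ((integralClosure ℤ_[p] K) : Set K) := by
    ext x
    simp only [SetLike.mem_coe]
    constructor
    · intro hx
      have hx' : IsIntegral (padicSubring p K 𝔭 s) x := hx
      have h𝒪 : IsIntegral (integralClosure ℤ_[p] K) x := by
        obtain ⟨P, hmonic, hev⟩ := hx'
        refine ⟨P.map (padicSubring p K 𝔭 s).subtype, hmonic.map _, ?_⟩
        rw [Polynomial.eval₂_map]
        exact hev
      exact isIntegral_trans x h𝒪
    · intro hx
      obtain ⟨P, hmonic, hev⟩ := (hx : IsIntegral ℤ_[p] x)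
      refine ⟨P.map ι, hmonic.map _, ?_⟩
      rw [Polynomial.eval₂_map]
      have hcomp : (algebraMap (padicSubring p K 𝔭 s) K).comp ι = algebraMap ℤ_[p] K := by
        ext z
        exact (IsScalarTower.algebraMap_apply ℤ_[p] (integralClosure ℤ_[p] K) K z).symm
      rw [hcomp]
      exact hev
  haveI hOfin : Module.Finite ℤ_[p] (integralClosure ℤ_[p] K) := IsIntegralClosure.finite ℤ_[p] ℚ_[p] K (integralClosure ℤ_[p] K)
  have hfinA : Module.Finite (padicSubring p K 𝔭 s) (integralClosure ℤ_[p] K) := by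
    obtain ⟨S, hS⟩ := hOfin.fg_top
    refine ⟨⟨S, ?_⟩⟩
    rw [eq_top_iff]
    rintro x -
    have hx : x ∈ Submodule.span ℤ_[p] (S : Set (integralClosure ℤ_[p] K)) := by rw [hS]; trivial
    refine Submodule.span_induction ?_ ?_ ?_ ?_ hx
    · intro y hy
      exact Submodule.subset_span hy
    · exact Submodule.zero_mem _
    · intro y z _ _ hy hz
      exact Submodule.add_mem _ hy hz
    · intro z m _ hm
      have hsm : z • m = (ι z) • m := by
        rw [Algebra.smul_def]
        rfl
      rw [hsm]
      exact Submodule.smul_mem _ _ hm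
  exact ⟨hloc, hmax, hcard, hIC, hfinA⟩


end
end
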